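/- arXiv:2007.09376 — 5 statements merged into one kernel-verified Lean document; each statement's English description precedes it below -/
import Mathlib

section
/- Theorem 2.2 (monotonicity for r > 3). Let n ≥ 2, let r > 3 be a real number, let μ > 0 and β > 0, and set η = ((r−3)/(2μ(r−1))) · (2/(βμ(r−1)))^{2/(r−3)}. Then for all continuously differentiable, compactly supported, divergence-free vector fields u, v : ℝⁿ → ℝⁿ, writing w := u − v, one has μ ∫_{ℝⁿ} |∇w(x)|² dx + ( b(u,u,w) − b(v,v,w) ) + β ∫_{ℝⁿ} ⟨|u(x)|^{r−1} u(x) − |v(x)|^{r−1} v(x), w(x)⟩ dx + η ∫_{ℝⁿ} |w(x)|² dx ≥ (μ/2) ∫_{ℝⁿ} |∇w(x)|² dx ≥ 0. -/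
open MeasureTheory
open scoped RealInnerProductSpace

/-- The Navier–Stokes trilinear form
`b(u,v,w) = ∫ Σ_{i,j} u_i (∂v_j/∂x_i) w_j dx` on `ℝⁿ`. -/
noncomputable def bForm (n : ℕ)
    (u v w : EuclideanSpace ℝ (Fin n) → EuclideanSpace ℝ (Fin n)) : ℝ :=
  ∫ x, ∑ i, ∑ j, u x i * fderiv ℝ v x (EuclideanSpace.single i 1) j * w x j

/-- The squared Frobenius norm of the gradient, `|∇w(x)|² = Σ_{i,j} ((∂w_j/∂x_i)(x))²`. -/
noncomputable def gradSq (n : ℕ)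
    (w : EuclideanSpace ℝ (Fin n) → EuclideanSpace ℝ (Fin n))
    (x : EuclideanSpace ℝ (Fin n)) : ℝ :=
  ∑ i, ∑ j, (fderiv ℝ w x (EuclideanSpace.single i 1) j) ^ 2

section Aux

open Real Function

lemma young_aux {r μ β η : ℝ} (hr : 3 < r) (hμ : 0 < μ) (hβ : 0 < β)
    (hη : η = (r - 3) / (2 * μ * (r - 1)) * (2 / (β * μ * (r - 1))) ^ ((2 : ℝ) / (r - 3)))
    (s : ℝ) (hs : 0 ≤ s) : s ^ 2 / (2 * μ) ≤ β / 2 * s ^ (r - 1) + η := by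
  have hr1 : (0:ℝ) < r - 1 := by linarith
  have hr3 : (0:ℝ) < r - 3 := by linarith
  set c : ℝ := 2 / (β * μ * (r - 1)) with hcdef
  have hc : 0 < c := by positivity
  set m : ℝ := c ^ ((1:ℝ) / (r - 3)) with hmdef
  have hm : 0 < m := rpow_pos_of_pos hc _
  have key1 : m ^ (r - 3) = c := by
    rw [hmdef, ← rpow_mul hc.le, one_div_mul_cancel hr3.ne', rpow_one]
  have key2 : m ^ 2 = c ^ ((2:ℝ) / (r - 3)) := by
    rw [hmdef, ← rpow_natCast (c ^ ((1:ℝ)/(r-3))) 2, ← rpow_mul hc.le]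
    congr 1
    field_simp
    norm_num
  have key3 : m ^ (r - 1) = c * m ^ 2 := by
    have h : r - 1 = (r - 3) + 2 := by ring
    rw [h, rpow_add hm, key1, rpow_two]
  set σ : ℝ := s / m with hσdef
  have hσ0 : 0 ≤ σ := by positivity
  have hsm : s = σ * m := (div_mul_cancel₀ s hm.ne').symm
  have hP0 : 0 ≤ σ ^ (r - 1) := rpow_nonneg hσ0 _
  have hw1 : (0:ℝ) ≤ 2 / (r - 1) := by positivity
  have hw2 : (0:ℝ) ≤ 1 - 2 / (r - 1) := by
    rw [sub_nonneg, div_le_one hr1]; linarith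
  have hsum : 2 / (r - 1) + (1 - 2 / (r - 1)) = 1 := by ring
  have hAM := Real.geom_mean_le_arith_mean2_weighted hw1 hw2 hP0 zero_le_one hsum
  rw [one_rpow, mul_one, mul_one, ← rpow_mul hσ0] at hAM
  have hexp : (r - 1) * (2 / (r - 1)) = 2 := by field_simp
  rw [hexp] at hAM
  have hσ2 : σ ^ (2:ℝ) = σ ^ 2 := rpow_two σ
  rw [hσ2] at hAM
  have hsr : s ^ (r - 1) = σ ^ (r - 1) * (c * m ^ 2) := by
    rw [hsm, mul_rpow hσ0 hm.le, key3]
  have hη' : η = (r - 3) / (2 * μ * (r - 1)) * m ^ 2 := by rw [hη, key2]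
  have hs2 : s ^ 2 = σ ^ 2 * m ^ 2 := by rw [hsm]; ring
  rw [hs2, hsr, hη', hcdef]
  have hm2 : (0:ℝ) ≤ m ^ 2 := sq_nonneg m
  calc σ ^ 2 * m ^ 2 / (2 * μ)
      ≤ (2 / (r - 1) * σ ^ (r - 1) + (1 - 2 / (r - 1))) * m ^ 2 / (2 * μ) := by
        gcongr
    _ = β / 2 * (σ ^ (r - 1) * (2 / (β * μ * (r - 1)) * m ^ 2))
          + (r - 3) / (2 * μ * (r - 1)) * m ^ 2 := by
        field_simp; ring

lemma mono_pointwise {E : Type*} [NormedAddCommGroup E] [InnerProductSpace ℝ E]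
    {r : ℝ} (hr : 1 ≤ r) (a b : E) :
    1 / 2 * ‖b‖ ^ (r - 1) * ‖a - b‖ ^ 2 ≤ ⟪(‖a‖ ^ (r - 1)) • a - (‖b‖ ^ (r - 1)) • b, a - b⟫ := by
  have hA : (0:ℝ) ≤ ‖a‖ ^ (r - 1) := rpow_nonneg (norm_nonneg a) _
  have hB : (0:ℝ) ≤ ‖b‖ ^ (r - 1) := rpow_nonneg (norm_nonneg b) _
  have hmono : 0 ≤ (‖a‖ ^ (r - 1) - ‖b‖ ^ (r - 1)) * (‖a‖ ^ 2 - ‖b‖ ^ 2) := by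
    rcases le_total ‖a‖ ‖b‖ with h | h
    · have h1 : ‖a‖ ^ (r - 1) ≤ ‖b‖ ^ (r - 1) := rpow_le_rpow (norm_nonneg a) h (by linarith)
      have h2 : ‖a‖ ^ 2 ≤ ‖b‖ ^ 2 := pow_le_pow_left₀ (norm_nonneg a) h 2
      nlinarith
    · have h1 : ‖b‖ ^ (r - 1) ≤ ‖a‖ ^ (r - 1) := rpow_le_rpow (norm_nonneg b) h (by linarith)
      have h2 : ‖b‖ ^ 2 ≤ ‖a‖ ^ 2 := pow_le_pow_left₀ (norm_nonneg b) h 2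
      nlinarith
  have hexp : ⟪(‖a‖ ^ (r - 1)) • a - (‖b‖ ^ (r - 1)) • b, a - b⟫
      = ‖a‖ ^ (r - 1) * ‖a‖ ^ 2 + ‖b‖ ^ (r - 1) * ‖b‖ ^ 2
        - (‖a‖ ^ (r - 1) + ‖b‖ ^ (r - 1)) * ⟪a, b⟫ := by
    rw [inner_sub_left, inner_sub_right, inner_sub_right, real_inner_smul_left,
      real_inner_smul_left, real_inner_smul_left, real_inner_smul_left,
      real_inner_self_eq_norm_sq, real_inner_self_eq_norm_sq, real_inner_comm b a]
    ring
  have hns : ‖a - b‖ ^ 2 = ‖a‖ ^ 2 - 2 * ⟪a, b⟫ + ‖b‖ ^ 2 := norm_sub_sq_real a b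
  have h0 : (0:ℝ) ≤ ‖a‖ ^ 2 - 2 * ⟪a, b⟫ + ‖b‖ ^ 2 := by
    rw [← hns]; positivity
  rw [hexp, hns]
  nlinarith [hmono, mul_nonneg hA h0]

lemma norm_sq_euclid {n : ℕ} (W : EuclideanSpace ℝ (Fin n)) : ‖W‖ ^ 2 = ∑ i, W i ^ 2 := by
  rw [EuclideanSpace.norm_eq, Real.sq_sqrt (by positivity)]
  simp [sq_abs]

lemma cs_pointwise {n : ℕ} (μ : ℝ) (hμ : 0 < μ) (W V : EuclideanSpace ℝ (Fin n))
    (D : Fin n → Fin n → ℝ) :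
    ∑ i, ∑ j, W i * D i j * V j
      ≤ μ / 2 * (∑ i, ∑ j, (D i j) ^ 2) + 1 / (2 * μ) * (‖V‖ ^ 2 * ‖W‖ ^ 2) := by
  set S : ℝ := ∑ i, ∑ j, (D i j) ^ 2 with hSdef
  set T : ℝ := ∑ i, ∑ j, W i * D i j * V j with hTdef
  have hS : 0 ≤ S := by positivity
  have hT2 : T ^ 2 ≤ S * (‖W‖ ^ 2 * ‖V‖ ^ 2) := by
    have hTalt : T = ∑ j, (∑ i, W i * D i j) * V j := by
      rw [hTdef, Finset.sum_comm]
      exact Finset.sum_congr rfl fun j _ => by rw [← Finset.sum_mul]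
    have h1 : T ^ 2 ≤ (∑ j, (∑ i, W i * D i j) ^ 2) * (∑ j, V j ^ 2) := by
      rw [hTalt]; exact Finset.sum_mul_sq_le_sq_mul_sq _ _ _
    have h2 : ∀ j, (∑ i, W i * D i j) ^ 2 ≤ (∑ i, W i ^ 2) * (∑ i, D i j ^ 2) :=
      fun j => Finset.sum_mul_sq_le_sq_mul_sq _ _ _
    have h3 : (∑ j, (∑ i, W i * D i j) ^ 2) ≤ (∑ i, W i ^ 2) * S := by
      rw [hSdef, Finset.sum_comm, Finset.mul_sum]
      exact Finset.sum_le_sum fun j _ => h2 j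
    calc T ^ 2 ≤ (∑ j, (∑ i, W i * D i j) ^ 2) * (∑ j, V j ^ 2) := h1
      _ ≤ (∑ i, W i ^ 2) * S * (∑ j, V j ^ 2) := by
          apply mul_le_mul_of_nonneg_right h3 (by positivity)
      _ = S * (‖W‖ ^ 2 * ‖V‖ ^ 2) := by rw [norm_sq_euclid, norm_sq_euclid]; ring
  set K : ℝ := ‖W‖ ^ 2 * ‖V‖ ^ 2 with hKdef
  have hK : 0 ≤ K := by positivity
  have h5 : 2 * μ * T ≤ μ ^ 2 * S + K := by
    by_contra hcon
    push_neg at hcon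
    have hA0 : (0:ℝ) ≤ μ ^ 2 * S + K := by positivity
    have hT0 : (0:ℝ) < 2 * μ * T := lt_of_le_of_lt hA0 hcon
    have hsq : (μ ^ 2 * S + K) ^ 2 < (2 * μ * T) ^ 2 := by nlinarith
    nlinarith [sq_nonneg (μ ^ 2 * S - K),
      mul_nonneg (mul_nonneg (mul_nonneg (by norm_num : (0:ℝ) ≤ 4) hμ.le) hμ.le)
        (sub_nonneg.2 hT2)]
  have goal' : T ≤ μ / 2 * S + 1 / (2 * μ) * K := by
    have heq : μ / 2 * S + 1 / (2 * μ) * K = (μ ^ 2 * S + K) / (2 * μ) := by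
      field_simp
    rw [heq, le_div_iff₀ (by positivity)]
    linarith
  calc T ≤ μ / 2 * S + 1 / (2 * μ) * K := goal'
    _ = μ / 2 * S + 1 / (2 * μ) * (‖V‖ ^ 2 * ‖W‖ ^ 2) := by rw [hKdef]; ring

variable {n : ℕ}
local notation "X" => EuclideanSpace ℝ (Fin n)

lemma coord_hasFDeriv {b : X → X} (hb : Differentiable ℝ b) (x : X) (j : Fin n) :
    HasFDerivAt (fun y => b y j) ((EuclideanSpace.proj j).comp (fderiv ℝ b x)) x :=
  (EuclideanSpace.proj (𝕜 := ℝ) j).hasFDerivAt.comp x (hb x).hasFDerivAt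

lemma coord_fderiv {b : X → X} (hb : Differentiable ℝ b) (x : X) (v : X) (j : Fin n) :
    fderiv ℝ (fun y => b y j) x v = fderiv ℝ b x v j := by
  rw [(coord_hasFDeriv hb x j).fderiv]; rfl

lemma coord_differentiable {b : X → X} (hb : Differentiable ℝ b) (j : Fin n) :
    Differentiable ℝ (fun y => b y j) :=
  fun x => (coord_hasFDeriv hb x j).differentiableAt

lemma coord_continuous {b : X → X} (hb : Continuous b) (j : Fin n) :
    Continuous (fun y => b y j) :=
  (EuclideanSpace.proj (𝕜 := ℝ) j).continuous.comp hb

lemma coord_contDiff {b : X → X} (hb : ContDiff ℝ 1 b) (j : Fin n) :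
    ContDiff ℝ 1 (fun y => b y j) :=
  (EuclideanSpace.proj (𝕜 := ℝ) j).contDiff.comp hb

lemma coord_compactSupport {b : X → X} (hcb : HasCompactSupport b) (j : Fin n) :
    HasCompactSupport (fun y => b y j) :=
  hcb.mono fun y hy h0 => hy (show b y j = 0 by rw [h0]; rfl)

lemma fderiv_apply_continuous {b : X → X} (hb : ContDiff ℝ 1 b) (v : X) :
    Continuous (fun x => fderiv ℝ b x v) :=
  (hb.continuous_fderiv one_ne_zero).clm_apply continuous_const

lemma fderiv_coord_continuous {b : X → X} (hb : ContDiff ℝ 1 b) (v : X) (j : Fin n) :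
    Continuous (fun x => fderiv ℝ b x v j) :=
  coord_continuous (fderiv_apply_continuous hb v) j

lemma fderiv_scalar_continuous {f : X → ℝ} (hf : ContDiff ℝ 1 f) (v : X) :
    Continuous (fun x => fderiv ℝ f x v) :=
  (hf.continuous_fderiv one_ne_zero).clm_apply continuous_const

lemma fderiv_scalar_compactSupport {f : X → ℝ} (hcf : HasCompactSupport f) (v : X) :
    HasCompactSupport (fun x => fderiv ℝ f x v) :=
  (hcf.fderiv (𝕜 := ℝ)).mono fun x hx h0 => hx
    (show fderiv ℝ f x v = 0 by rw [h0]; rfl)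

lemma fderiv_coord_compactSupport {b : X → X} (hcb : HasCompactSupport b) (v : X) (j : Fin n) :
    HasCompactSupport (fun x => fderiv ℝ b x v j) :=
  (hcb.fderiv (𝕜 := ℝ)).mono fun x hx h0 => hx
    (show fderiv ℝ b x v j = 0 by rw [h0]; rfl)

lemma hcs_mul_left {f g : X → ℝ} (hf : HasCompactSupport f) :
    HasCompactSupport (fun x => f x * g x) :=
  hf.mono fun x hx h0 => hx (show f x * g x = 0 by rw [h0, zero_mul])

lemma hcs_mul_right {f g : X → ℝ} (hg : HasCompactSupport g) :
    HasCompactSupport (fun x => f x * g x) :=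
  hg.mono fun x hx h0 => hx (show f x * g x = 0 by rw [h0, mul_zero])

/-- Integration by parts: `∫ Σᵢ aᵢ ∂ᵢf = 0` for a divergence-free `a`. -/
lemma ibp (a : X → X) (f : X → ℝ)
    (ha : ContDiff ℝ 1 a) (hca : HasCompactSupport a)
    (hda : ∀ x, ∑ i, fderiv ℝ a x (EuclideanSpace.single i 1) i = 0)
    (hf : ContDiff ℝ 1 f) (hcf : HasCompactSupport f) :
    ∫ x, ∑ i, a x i * fderiv ℝ f x (EuclideanSpace.single i 1) = 0 := by
  have hint : ∀ i : Fin n,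
      Integrable (fun x => a x i * fderiv ℝ f x (EuclideanSpace.single i 1)) := fun i =>
    ((coord_continuous ha.continuous i).mul
      (fderiv_scalar_continuous hf _)).integrable_of_hasCompactSupport
      (hcs_mul_left (coord_compactSupport hca i))
  rw [integral_finset_sum _ (fun i _ => hint i)]
  have key : ∀ i : Fin n,
      (∫ x, a x i * fderiv ℝ f x (EuclideanSpace.single i 1))
        = - ∫ x, fderiv ℝ a x (EuclideanSpace.single i 1) i * f x := by
    intro i
    have heq : (fun x => fderiv ℝ (fun y => a y i) x (EuclideanSpace.single i 1) * f x)
        = fun x => fderiv ℝ a x (EuclideanSpace.single i 1) i * f x :=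
      funext fun x => by rw [coord_fderiv (ha.differentiable one_ne_zero) x _ i]
    have h := integral_mul_fderiv_eq_neg_fderiv_mul_of_integrable
      (f := fun x => a x i) (g := f) (v := EuclideanSpace.single i 1) (μ := volume)
      ?_ ?_ ?_ (fun x _ => coord_differentiable (ha.differentiable one_ne_zero) i x) (fun x _ => hf.differentiable one_ne_zero x)
    · rw [h, heq]
    · rw [heq]
      exact ((fderiv_coord_continuous ha _ i).mul hf.continuous).integrable_of_hasCompactSupport
        (hcs_mul_right hcf)
    · exact hint i
    · exact ((coord_continuous ha.continuous i).mul hf.continuous).integrable_of_hasCompactSupport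
        (hcs_mul_right hcf)
  have hi : ∀ i : Fin n,
      Integrable (fun x => fderiv ℝ a x (EuclideanSpace.single i 1) i * f x) := fun i =>
    ((fderiv_coord_continuous ha _ i).mul hf.continuous).integrable_of_hasCompactSupport
      (hcs_mul_right hcf)
  rw [Finset.sum_congr rfl fun i _ => key i, Finset.sum_neg_distrib,
    ← integral_finset_sum _ fun i _ => hi i, neg_eq_zero]
  have hz : ∀ x, (∑ i, fderiv ℝ a x (EuclideanSpace.single i 1) i * f x) = 0 := fun x => by
    rw [← Finset.sum_mul, hda x, zero_mul]
  simp only [hz, integral_zero]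

/-- `∫ Σᵢ aᵢ ∂ᵢ(bⱼ cⱼ) = 0` for divergence-free `a`. -/
lemma ibp_prod (a b c : X → X) (j : Fin n)
    (ha : ContDiff ℝ 1 a) (hca : HasCompactSupport a)
    (hda : ∀ x, ∑ i, fderiv ℝ a x (EuclideanSpace.single i 1) i = 0)
    (hb : ContDiff ℝ 1 b) (hc : ContDiff ℝ 1 c) (hcc : HasCompactSupport c) :
    ∫ x, ∑ i, a x i * (fderiv ℝ b x (EuclideanSpace.single i 1) j * c x j
      + b x j * fderiv ℝ c x (EuclideanSpace.single i 1) j) = 0 := by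
  have hbd := hb.differentiable one_ne_zero
  have hcd := hc.differentiable one_ne_zero
  have hf : ContDiff ℝ 1 (fun y => b y j * c y j) :=
    (coord_contDiff hb j).mul (coord_contDiff hc j)
  have hcf : HasCompactSupport (fun y => b y j * c y j) :=
    hcs_mul_right (coord_compactSupport hcc j)
  have hfd : ∀ (x : X) (vv : X), fderiv ℝ (fun y => b y j * c y j) x vv
      = fderiv ℝ b x vv j * c x j + b x j * fderiv ℝ c x vv j := by
    intro x vv
    rw [fderiv_fun_mul (coord_differentiable hbd j x) (coord_differentiable hcd j x)]
    simp only [ContinuousLinearMap.add_apply, ContinuousLinearMap.smul_apply, smul_eq_mul]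
    rw [coord_fderiv hbd x vv j, coord_fderiv hcd x vv j]
    ring
  have h := ibp a (fun y => b y j * c y j) ha hca hda hf hcf
  rw [← h]
  congr 1
  funext x
  exact Finset.sum_congr rfl fun i _ => by rw [hfd x _]

lemma integrable_bform_integrand (a b c : X → X) (ha : Continuous a)
    (hb : ContDiff ℝ 1 b) (hc : Continuous c) (hcc : HasCompactSupport c) :
    Integrable (fun x => ∑ i, ∑ j,
      a x i * fderiv ℝ b x (EuclideanSpace.single i 1) j * c x j) := by
  apply Continuous.integrable_of_hasCompactSupport
  · apply continuous_finset_sum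
    intro i _
    apply continuous_finset_sum
    intro j _
    exact ((coord_continuous ha i).mul (fderiv_coord_continuous hb _ j)).mul
      (coord_continuous hc j)
  · refine hcc.mono fun x hx => ?_
    rw [Function.mem_support] at hx ⊢
    intro h0
    apply hx
    refine Finset.sum_eq_zero fun i _ => Finset.sum_eq_zero fun j _ => ?_
    rw [show c x j = 0 by rw [h0]; rfl, mul_zero]

lemma integrable_prod_integrand (a b c : X → X) (j : Fin n) (ha : Continuous a)
    (hb : ContDiff ℝ 1 b) (hc : ContDiff ℝ 1 c) (hcc : HasCompactSupport c) :
    Integrable (fun x => ∑ i, a x i * (fderiv ℝ b x (EuclideanSpace.single i 1) j * c x j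
      + b x j * fderiv ℝ c x (EuclideanSpace.single i 1) j)) := by
  apply Continuous.integrable_of_hasCompactSupport
  · apply continuous_finset_sum
    intro i _
    exact (coord_continuous ha i).mul
      (((fderiv_coord_continuous hb _ j).mul (coord_continuous hc.continuous j)).add
        ((coord_continuous hb.continuous j).mul (fderiv_coord_continuous hc _ j)))
  · refine hcc.mono' fun x hx => ?_
    rw [Function.mem_support] at hx
    by_contra hxt
    apply hx
    have h1 : c x = 0 := image_eq_zero_of_notMem_tsupport hxt
    have h2 : fderiv ℝ c x = 0 := by
      by_contra h2
      exact hxt (support_fderiv_subset ℝ (f := c) h2)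
    refine Finset.sum_eq_zero fun i _ => ?_
    rw [show c x j = 0 by rw [h1]; rfl, show fderiv ℝ c x (EuclideanSpace.single i 1) j = 0
      by rw [h2]; rfl, mul_zero, mul_zero, add_zero, mul_zero]

end Aux

/-- Theorem 2.2: monotonicity of the convective Brinkman–Forchheimer operator for `r > 3`. -/
theorem monotonicity_r_gt_three (n : ℕ) (hn : 2 ≤ n) (r μ β η : ℝ)
    (hr : 3 < r) (hμ : 0 < μ) (hβ : 0 < β)
    (hη : η = (r - 3) / (2 * μ * (r - 1)) * (2 / (β * μ * (r - 1))) ^ ((2 : ℝ) / (r - 3)))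
    (u v : EuclideanSpace ℝ (Fin n) → EuclideanSpace ℝ (Fin n))
    (hu : ContDiff ℝ 1 u) (hcu : HasCompactSupport u)
    (hdu : ∀ x, ∑ i, fderiv ℝ u x (EuclideanSpace.single i 1) i = 0)
    (hv : ContDiff ℝ 1 v) (hcv : HasCompactSupport v)
    (hdv : ∀ x, ∑ i, fderiv ℝ v x (EuclideanSpace.single i 1) i = 0) :
    (μ / 2) * (∫ x, gradSq n (u - v) x) ≤
      μ * (∫ x, gradSq n (u - v) x)
        + (bForm n u u (u - v) - bForm n v v (u - v))
        + β * (∫ x, ⟪(‖u x‖ ^ (r - 1)) • u x - (‖v x‖ ^ (r - 1)) • v x, u x - v x⟫)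
        + η * (∫ x, ‖u x - v x‖ ^ 2)
    ∧ 0 ≤ (μ / 2) * (∫ x, gradSq n (u - v) x) := by
  have hr1 : (1:ℝ) ≤ r := by linarith
  have hud := hu.differentiable one_ne_zero
  have hvd := hv.differentiable one_ne_zero
  set w : (EuclideanSpace ℝ (Fin n) → EuclideanSpace ℝ (Fin n)) := u - v with hwdef
  have hw : ContDiff ℝ 1 w := hu.sub hv
  have hcw : HasCompactSupport w := by
    apply HasCompactSupport.intro (hcu.union hcv)
    intro x hx
    have h1 : u x = 0 := image_eq_zero_of_notMem_tsupport (fun h => hx (Set.mem_union_left _ h))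
    have h2 : v x = 0 := image_eq_zero_of_notMem_tsupport (fun h => hx (Set.mem_union_right _ h))
    show u x - v x = 0
    rw [h1, h2, sub_zero]
  have hwd := hw.differentiable one_ne_zero
  have hDw : ∀ x, fderiv ℝ w x = fderiv ℝ u x - fderiv ℝ v x := fun x =>
    fderiv_sub (hud x) (hvd x)
  have hwco : ∀ (x : EuclideanSpace ℝ (Fin n)) (j : Fin n), w x j = u x j - v x j :=
    fun x j => rfl
  have hDwco : ∀ (x : EuclideanSpace ℝ (Fin n)) (i j : Fin n),
      fderiv ℝ w x (EuclideanSpace.single i 1) j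
        = fderiv ℝ u x (EuclideanSpace.single i 1) j
          - fderiv ℝ v x (EuclideanSpace.single i 1) j := by
    intro x i j
    rw [hDw x]
    simp
  have hdw : ∀ x, ∑ i, fderiv ℝ w x (EuclideanSpace.single i 1) i = 0 := by
    intro x
    simp only [hDwco]
    rw [Finset.sum_sub_distrib, hdu x, hdv x, sub_zero]
  -- integrability of the three trilinear integrands
  have hIA := integrable_bform_integrand u u w hu.continuous hu hw.continuous hcw
  have hIB := integrable_bform_integrand v v w hv.continuous hv hw.continuous hcw
  have hIC := integrable_bform_integrand w w v hw.continuous hw hv.continuous hcv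
  -- integration by parts identities
  have hPz : ∀ j : Fin n, (∫ x, ∑ i, u x i *
      (fderiv ℝ w x (EuclideanSpace.single i 1) j * w x j
        + w x j * fderiv ℝ w x (EuclideanSpace.single i 1) j)) = 0 :=
    fun j => ibp_prod u w w j hu hcu hdu hw hw hcw
  have hQz : ∀ j : Fin n, (∫ x, ∑ i, w x i *
      (fderiv ℝ v x (EuclideanSpace.single i 1) j * w x j
        + v x j * fderiv ℝ w x (EuclideanSpace.single i 1) j)) = 0 :=
    fun j => ibp_prod w v w j hw hcw hdw hv hw hcw
  have hIP : ∀ j : Fin n, Integrable (fun x => ∑ i, u x i *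
      (fderiv ℝ w x (EuclideanSpace.single i 1) j * w x j
        + w x j * fderiv ℝ w x (EuclideanSpace.single i 1) j)) :=
    fun j => integrable_prod_integrand u w w j hu.continuous hw hw hcw
  have hIQ : ∀ j : Fin n, Integrable (fun x => ∑ i, w x i *
      (fderiv ℝ v x (EuclideanSpace.single i 1) j * w x j
        + v x j * fderiv ℝ w x (EuclideanSpace.single i 1) j)) :=
    fun j => integrable_prod_integrand w v w j hw.continuous hv hw hcw
  -- pointwise algebraic identity
  have hpt : ∀ x, (∑ i, ∑ j, u x i * fderiv ℝ u x (EuclideanSpace.single i 1) j * w x j)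
      - (∑ i, ∑ j, v x i * fderiv ℝ v x (EuclideanSpace.single i 1) j * w x j)
      + (∑ i, ∑ j, w x i * fderiv ℝ w x (EuclideanSpace.single i 1) j * v x j)
      = ∑ j, ((2:ℝ)⁻¹ * (∑ i, u x i *
          (fderiv ℝ w x (EuclideanSpace.single i 1) j * w x j
            + w x j * fderiv ℝ w x (EuclideanSpace.single i 1) j))
        + (∑ i, w x i *
          (fderiv ℝ v x (EuclideanSpace.single i 1) j * w x j
            + v x j * fderiv ℝ w x (EuclideanSpace.single i 1) j))) := by
    intro x
    rw [Finset.sum_comm (γ := Fin n), Finset.sum_comm (γ := Fin n) (s := Finset.univ)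
      (t := Finset.univ) (f := fun i j => v x i * fderiv ℝ v x (EuclideanSpace.single i 1) j * w x j),
      Finset.sum_comm (γ := Fin n) (s := Finset.univ) (t := Finset.univ)
      (f := fun i j => w x i * fderiv ℝ w x (EuclideanSpace.single i 1) j * v x j),
      ← Finset.sum_sub_distrib, ← Finset.sum_add_distrib]
    refine Finset.sum_congr rfl fun j _ => ?_
    rw [Finset.mul_sum, ← Finset.sum_sub_distrib, ← Finset.sum_add_distrib,
      ← Finset.sum_add_distrib]
    refine Finset.sum_congr rfl fun i _ => ?_
    simp only [hwco, hDwco]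
    ring
  -- step 1 : b(u,u,w) - b(v,v,w) = - ∫ Σ w ∂w v
  have hstep1 : bForm n u u w - bForm n v v w
      = - ∫ x, ∑ i, ∑ j, w x i * fderiv ℝ w x (EuclideanSpace.single i 1) j * v x j := by
    have hkey : ((∫ x, ∑ i, ∑ j, u x i * fderiv ℝ u x (EuclideanSpace.single i 1) j * w x j)
        - ∫ x, ∑ i, ∑ j, v x i * fderiv ℝ v x (EuclideanSpace.single i 1) j * w x j)
        + (∫ x, ∑ i, ∑ j, w x i * fderiv ℝ w x (EuclideanSpace.single i 1) j * v x j) = 0 := by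
      have hsplit : (∫ x, ((∑ i, ∑ j, u x i * fderiv ℝ u x (EuclideanSpace.single i 1) j * w x j)
              - (∑ i, ∑ j, v x i * fderiv ℝ v x (EuclideanSpace.single i 1) j * w x j)
              + (∑ i, ∑ j, w x i * fderiv ℝ w x (EuclideanSpace.single i 1) j * v x j)))
          = ((∫ x, ∑ i, ∑ j, u x i * fderiv ℝ u x (EuclideanSpace.single i 1) j * w x j)
            - ∫ x, ∑ i, ∑ j, v x i * fderiv ℝ v x (EuclideanSpace.single i 1) j * w x j)
            + ∫ x, ∑ i, ∑ j, w x i * fderiv ℝ w x (EuclideanSpace.single i 1) j * v x j := by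
        have hIAB : Integrable (fun x =>
            (∑ i, ∑ j, u x i * fderiv ℝ u x (EuclideanSpace.single i 1) j * w x j)
            - (∑ i, ∑ j, v x i * fderiv ℝ v x (EuclideanSpace.single i 1) j * w x j)) :=
          hIA.sub hIB
        rw [integral_add hIAB hIC, integral_sub hIA hIB]
      rw [← hsplit]
      calc (∫ x, ((∑ i, ∑ j, u x i * fderiv ℝ u x (EuclideanSpace.single i 1) j * w x j)
              - (∑ i, ∑ j, v x i * fderiv ℝ v x (EuclideanSpace.single i 1) j * w x j)
              + (∑ i, ∑ j, w x i * fderiv ℝ w x (EuclideanSpace.single i 1) j * v x j)))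
          = ∫ x, ∑ j, ((2:ℝ)⁻¹ * (∑ i, u x i *
              (fderiv ℝ w x (EuclideanSpace.single i 1) j * w x j
                + w x j * fderiv ℝ w x (EuclideanSpace.single i 1) j))
            + (∑ i, w x i *
              (fderiv ℝ v x (EuclideanSpace.single i 1) j * w x j
                + v x j * fderiv ℝ w x (EuclideanSpace.single i 1) j))) := by
            apply integral_congr_ae
            filter_upwards with x
            exact hpt x
        _ = ∑ j, ∫ x, ((2:ℝ)⁻¹ * (∑ i, u x i *
              (fderiv ℝ w x (EuclideanSpace.single i 1) j * w x j
                + w x j * fderiv ℝ w x (EuclideanSpace.single i 1) j))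
            + (∑ i, w x i *
              (fderiv ℝ v x (EuclideanSpace.single i 1) j * w x j
                + v x j * fderiv ℝ w x (EuclideanSpace.single i 1) j))) :=
            integral_finset_sum _ fun j _ => ((hIP j).const_mul _).add (hIQ j)
        _ = 0 := by
            refine Finset.sum_eq_zero fun j _ => ?_
            rw [integral_add ((hIP j).const_mul _) (hIQ j), integral_const_mul,
              hPz j, hQz j, mul_zero, add_zero]
    have e1 : bForm n u u w
        = ∫ x, ∑ i, ∑ j, u x i * fderiv ℝ u x (EuclideanSpace.single i 1) j * w x j := rfl
    have e2 : bForm n v v w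
        = ∫ x, ∑ i, ∑ j, v x i * fderiv ℝ v x (EuclideanSpace.single i 1) j * w x j := rfl
    rw [e1, e2]
    linarith
  -- remaining integrability
  have hIgrad : Integrable (fun x => gradSq n w x) := by
    apply Continuous.integrable_of_hasCompactSupport
    · apply continuous_finset_sum
      intro i _
      apply continuous_finset_sum
      intro j _
      exact (fderiv_coord_continuous hw _ j).pow 2
    · refine hcw.mono' fun x hx => ?_
      rw [Function.mem_support] at hx
      by_contra hxt
      apply hx
      have h2 : fderiv ℝ w x = 0 := by
        by_contra h2
        exact hxt (support_fderiv_subset ℝ (f := w) h2)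
      refine Finset.sum_eq_zero fun i _ => Finset.sum_eq_zero fun j _ => ?_
      rw [show fderiv ℝ w x (EuclideanSpace.single i 1) j = 0 by rw [h2]; rfl]
      norm_num
  have hIinn : Integrable (fun x =>
      ⟪(‖u x‖ ^ (r - 1)) • u x - (‖v x‖ ^ (r - 1)) • v x, u x - v x⟫) := by
    apply Continuous.integrable_of_hasCompactSupport
    · exact Continuous.inner
        (((hu.continuous.norm.rpow_const fun x => Or.inr (by linarith)).smul hu.continuous).sub
          ((hv.continuous.norm.rpow_const fun x => Or.inr (by linarith)).smul hv.continuous))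
        (hu.continuous.sub hv.continuous)
    · refine hcw.mono fun x hx h0 => hx ?_
      show ⟪(‖u x‖ ^ (r - 1)) • u x - (‖v x‖ ^ (r - 1)) • v x, u x - v x⟫ = 0
      rw [show u x - v x = 0 from h0, inner_zero_right]
  have hInw2 : Integrable (fun x => ‖u x - v x‖ ^ 2) := by
    apply Continuous.integrable_of_hasCompactSupport
    · exact ((hu.continuous.sub hv.continuous).norm.pow 2)
    · refine hcw.mono fun x hx h0 => hx ?_
      show ‖u x - v x‖ ^ 2 = 0
      rw [show u x - v x = 0 from h0]
      simp
  -- pointwise inequality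
  have hptC : ∀ x, (∑ i, ∑ j, w x i * fderiv ℝ w x (EuclideanSpace.single i 1) j * v x j)
      ≤ μ / 2 * gradSq n w x
        + (β * ⟪(‖u x‖ ^ (r - 1)) • u x - (‖v x‖ ^ (r - 1)) • v x, u x - v x⟫
          + η * ‖u x - v x‖ ^ 2) := by
    intro x
    have hwx : u x - v x = w x := rfl
    rw [hwx]
    have h1 := cs_pointwise μ hμ (w x) (v x)
      (fun i j => fderiv ℝ w x (EuclideanSpace.single i 1) j)
    have h2 := young_aux hr hμ hβ hη ‖v x‖ (norm_nonneg _)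
    have h3 := mono_pointwise hr1 (u x) (v x)
    rw [hwx] at h3
    have hgs : gradSq n w x = ∑ i, ∑ j, (fderiv ℝ w x (EuclideanSpace.single i 1) j) ^ 2 := rfl
    rw [hgs]
    have m1 := mul_le_mul_of_nonneg_right h2 (sq_nonneg ‖w x‖)
    have m2 := mul_le_mul_of_nonneg_left h3 hβ.le
    have e : ‖v x‖ ^ 2 / (2 * μ) * ‖w x‖ ^ 2
        = 1 / (2 * μ) * (‖v x‖ ^ 2 * ‖w x‖ ^ 2) := by ring
    rw [e] at m1
    nlinarith [h1, m1, m2]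
  -- integrate the pointwise inequality
  have hRHSint : Integrable (fun x => μ / 2 * gradSq n w x
      + (β * ⟪(‖u x‖ ^ (r - 1)) • u x - (‖v x‖ ^ (r - 1)) • v x, u x - v x⟫
        + η * ‖u x - v x‖ ^ 2)) :=
    (hIgrad.const_mul _).add ((hIinn.const_mul _).add (hInw2.const_mul _))
  have hICle : (∫ x, ∑ i, ∑ j, w x i * fderiv ℝ w x (EuclideanSpace.single i 1) j * v x j)
      ≤ μ / 2 * (∫ x, gradSq n w x)
        + (β * (∫ x, ⟪(‖u x‖ ^ (r - 1)) • u x - (‖v x‖ ^ (r - 1)) • v x, u x - v x⟫)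
          + η * (∫ x, ‖u x - v x‖ ^ 2)) := by
    calc (∫ x, ∑ i, ∑ j, w x i * fderiv ℝ w x (EuclideanSpace.single i 1) j * v x j)
        ≤ ∫ x, (μ / 2 * gradSq n w x
          + (β * ⟪(‖u x‖ ^ (r - 1)) • u x - (‖v x‖ ^ (r - 1)) • v x, u x - v x⟫
            + η * ‖u x - v x‖ ^ 2)) := integral_mono hIC hRHSint fun x => hptC x
      _ = μ / 2 * (∫ x, gradSq n w x)
          + (β * (∫ x, ⟪(‖u x‖ ^ (r - 1)) • u x - (‖v x‖ ^ (r - 1)) • v x, u x - v x⟫)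
            + η * (∫ x, ‖u x - v x‖ ^ 2)) := by
          have hIb : Integrable (fun x =>
              β * ⟪(‖u x‖ ^ (r - 1)) • u x - (‖v x‖ ^ (r - 1)) • v x, u x - v x⟫) :=
            hIinn.const_mul β
          have hIe : Integrable (fun x => η * ‖u x - v x‖ ^ 2) := hInw2.const_mul η
          have hI2 : Integrable (fun x =>
              β * ⟪(‖u x‖ ^ (r - 1)) • u x - (‖v x‖ ^ (r - 1)) • v x, u x - v x⟫
                + η * ‖u x - v x‖ ^ 2) := hIb.add hIe
          have hIg : Integrable (fun x => μ / 2 * gradSq n w x) := hIgrad.const_mul _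
          rw [integral_add hIg hI2, integral_add hIb hIe,
            integral_const_mul, integral_const_mul, integral_const_mul]
  have hGnn : 0 ≤ ∫ x, gradSq n w x := by
    apply integral_nonneg
    intro x
    apply Finset.sum_nonneg
    intro i _
    apply Finset.sum_nonneg
    intro j _
    positivity
  constructor
  · linarith
  · have : (0:ℝ) ≤ μ / 2 := by linarith
    exact mul_nonneg this hGnn
end

section
/- Theorem 2.3 (global monotonicity in the critical case r = 3). Let n ≥ 2, μ > 0 and β > 0 with 2βμ ≥ 1. Then for all continuously differentiable, compactly supported, divergence-free vector fields u, v : ℝⁿ → ℝⁿ, writing w := u − v, one has μ ∫_{ℝⁿ} |∇w(x)|² dx + ( b(u,u,w) − b(v,v,w) ) + β ∫_{ℝⁿ} ⟨|u(x)|² u(x) − |v(x)|² v(x), w(x)⟩ dx ≥ (1/2)(β − 1/(2μ)) ∫_{ℝⁿ} |v(x)|² |w(x)|² dx ≥ 0. -/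
open MeasureTheory
open scoped RealInnerProductSpace

set_option maxHeartbeats 1000000
namespace NSproof
open Finset

variable {n : ℕ}
local notation "E" => EuclideanSpace ℝ (Fin n)

lemma coordCD {w : E → E} (hw : ContDiff ℝ 1 w) (j : Fin n) :
    ContDiff ℝ 1 (fun x => w x j) := by
  have := ((EuclideanSpace.proj j : E →L[ℝ] ℝ).contDiff).comp hw
  exact this

lemma coordFD {w : E → E} (hw : Differentiable ℝ w) (j : Fin n) (x ξ : E) :
    fderiv ℝ (fun y => w y j) x ξ = fderiv ℝ w x ξ j := by
  have h := (((EuclideanSpace.proj j : E →L[ℝ] ℝ).hasFDerivAt (x := w x)).comp x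
    (hw x).hasFDerivAt).fderiv
  have h2 : fderiv ℝ (fun y => w y j) x = fderiv ℝ ((EuclideanSpace.proj j : E →L[ℝ] ℝ) ∘ w) x := rfl
  rw [h2, h]; rfl

lemma coordCS {w : E → E} (hc : HasCompactSupport w) (j : Fin n) :
    HasCompactSupport (fun x => w x j) :=
  hc.comp_left (g := (EuclideanSpace.proj j : E →L[ℝ] ℝ)) (by simp)

lemma hcsFactor {α : Type*} [Zero α] {f : E → ℝ} {w : E → α} (hc : HasCompactSupport w)
    (h0 : ∀ x, w x = 0 → f x = 0) : HasCompactSupport f :=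
  HasCompactSupport.intro hc (fun x hx => h0 x (image_eq_zero_of_notMem_tsupport hx))

lemma normSq (y : EuclideanSpace ℝ (Fin n)) : ‖y‖ ^ 2 = ∑ i, (y i) ^ 2 := by
  rw [EuclideanSpace.norm_eq, Real.sq_sqrt (by positivity)]
  simp [sq_abs]

lemma contFDvec {w : E → E} (hw : ContDiff ℝ 1 w) (ξ : E) (j : Fin n) :
    Continuous (fun x => fderiv ℝ w x ξ j) := by
  have h1 : Continuous (fun x => fderiv ℝ w x ξ) :=
    (hw.continuous_fderiv one_ne_zero).clm_apply continuous_const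
  have := ((EuclideanSpace.proj j : E →L[ℝ] ℝ).continuous).comp h1
  exact this

lemma contFDscalar {f : E → ℝ} (hf : ContDiff ℝ 1 f) (ξ : E) :
    Continuous (fun x => fderiv ℝ f x ξ) :=
  (hf.continuous_fderiv one_ne_zero).clm_apply continuous_const

/-- Integrability of the `bForm` integrand. -/
lemma bIntegrable {a b c : E → E} (ha : ContDiff ℝ 1 a) (hb : ContDiff ℝ 1 b)
    (hc : ContDiff ℝ 1 c) (hca : HasCompactSupport a) :
    Integrable (fun x => ∑ i, ∑ j,
      a x i * fderiv ℝ b x (EuclideanSpace.single i 1) j * c x j) := by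
  apply Continuous.integrable_of_hasCompactSupport
  · exact continuous_finset_sum _ fun i _ => continuous_finset_sum _ fun j _ =>
      (((coordCD ha i).continuous.mul (contFDvec hb _ j)).mul (coordCD hc j).continuous)
  · exact hcsFactor hca (fun x hx => by simp [hx])

/-- If `a` is divergence free and compactly supported, `∫ ⟨a, ∇f⟩ = 0`. -/
lemma divergence_int_zero {a : E → E} {f : E → ℝ}
    (ha : ContDiff ℝ 1 a) (hca : HasCompactSupport a)
    (hda : ∀ x, ∑ i, fderiv ℝ a x (EuclideanSpace.single i 1) i = 0)
    (hf : ContDiff ℝ 1 f) (hcf : HasCompactSupport f) :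
    ∫ x, ∑ i, a x i * fderiv ℝ f x (EuclideanSpace.single i 1) = 0 := by
  have hfd : Differentiable ℝ f := hf.differentiable one_ne_zero
  have had : Differentiable ℝ a := ha.differentiable one_ne_zero
  have int1 : ∀ i : Fin n, Integrable
      (fun x => a x i * fderiv ℝ f x (EuclideanSpace.single i 1)) := fun i =>
    Continuous.integrable_of_hasCompactSupport
      ((coordCD ha i).continuous.mul (contFDscalar hf _))
      (hcsFactor hca (fun x hx => by simp [hx]))
  have int2 : ∀ i : Fin n, Integrable
      (fun x => fderiv ℝ (fun y => a y i) x (EuclideanSpace.single i 1) * f x) := by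
    intro i
    have heq : (fun x => fderiv ℝ (fun y => a y i) x (EuclideanSpace.single i 1) * f x)
        = fun x => fderiv ℝ a x (EuclideanSpace.single i 1) i * f x := by
      funext x; rw [coordFD had]
    rw [heq]
    exact Continuous.integrable_of_hasCompactSupport
      ((contFDvec ha _ i).mul hf.continuous)
      (hcsFactor hcf (fun x hx => by simp [hx]))
  have int3 : ∀ i : Fin n, Integrable (fun x => a x i * f x) := fun i =>
    Continuous.integrable_of_hasCompactSupport
      ((coordCD ha i).continuous.mul hf.continuous)
      (hcsFactor hca (fun x hx => by simp [hx]))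
  rw [integral_finset_sum _ (fun i _ => int1 i)]
  have key : ∀ i : Fin n,
      (∫ x, a x i * fderiv ℝ f x (EuclideanSpace.single i 1)) =
      - ∫ x, fderiv ℝ (fun y => a y i) x (EuclideanSpace.single i 1) * f x := fun i =>
    integral_mul_fderiv_eq_neg_fderiv_mul_of_integrable (int2 i) (int1 i) (int3 i)
      (fun x _ => (coordCD ha i).differentiable one_ne_zero x) (fun x _ => hfd x)
  calc ∑ i, ∫ x, a x i * fderiv ℝ f x (EuclideanSpace.single i 1)
      = ∑ i, - ∫ x, fderiv ℝ (fun y => a y i) x (EuclideanSpace.single i 1) * f x := by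
        exact Finset.sum_congr rfl fun i _ => key i
    _ = - ∑ i, ∫ x, fderiv ℝ (fun y => a y i) x (EuclideanSpace.single i 1) * f x := by
        rw [Finset.sum_neg_distrib]
    _ = - ∫ x, ∑ i, fderiv ℝ (fun y => a y i) x (EuclideanSpace.single i 1) * f x := by
        rw [integral_finset_sum _ (fun i _ => int2 i)]
    _ = 0 := by
        have : ∀ x, ∑ i, fderiv ℝ (fun y => a y i) x (EuclideanSpace.single i 1) * f x = 0 := by
          intro x
          have : ∀ i : Fin n, fderiv ℝ (fun y => a y i) x (EuclideanSpace.single i 1)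
              = fderiv ℝ a x (EuclideanSpace.single i 1) i := fun i => coordFD had i x _
          rw [Finset.sum_congr rfl fun i _ => by rw [this i]]
          rw [← Finset.sum_mul, hda x, zero_mul]
        simp only [this, integral_zero, neg_zero]

/-- Antisymmetry of the trilinear integrand in the last two slots, for a divergence-free
compactly supported first slot. -/
lemma antisymm {a b c : E → E}
    (ha : ContDiff ℝ 1 a) (hca : HasCompactSupport a)
    (hda : ∀ x, ∑ i, fderiv ℝ a x (EuclideanSpace.single i 1) i = 0)
    (hb : ContDiff ℝ 1 b) (hcb : HasCompactSupport b)
    (hc : ContDiff ℝ 1 c) (hcc : HasCompactSupport c) :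
    (∫ x, ∑ i, ∑ j, a x i * fderiv ℝ b x (EuclideanSpace.single i 1) j * c x j)
      + (∫ x, ∑ i, ∑ j, a x i * fderiv ℝ c x (EuclideanSpace.single i 1) j * b x j) = 0 := by
  have hbd : Differentiable ℝ b := hb.differentiable one_ne_zero
  have hcd : Differentiable ℝ c := hc.differentiable one_ne_zero
  set f : E → ℝ := fun x => ∑ j, b x j * c x j with hf_def
  have hfCD : ContDiff ℝ 1 f :=
    ContDiff.sum fun j _ => (coordCD hb j).mul (coordCD hc j)
  have hfCS : HasCompactSupport f :=
    hcsFactor hcb (fun x hx => by simp [hf_def, hx])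
  have hdf : ∀ (x : E) (i : Fin n), fderiv ℝ f x (EuclideanSpace.single i 1) =
      ∑ j, (fderiv ℝ b x (EuclideanSpace.single i 1) j * c x j
        + b x j * fderiv ℝ c x (EuclideanSpace.single i 1) j) := by
    intro x i
    have h1 : fderiv ℝ f x = ∑ j, fderiv ℝ (fun y => b y j * c y j) x :=
      fderiv_fun_sum fun j _ =>
        ((coordCD hb j).differentiable one_ne_zero x).mul ((coordCD hc j).differentiable one_ne_zero x)
    rw [h1, ContinuousLinearMap.sum_apply]
    refine Finset.sum_congr rfl fun j _ => ?_
    rw [fderiv_fun_mul ((coordCD hb j).differentiable one_ne_zero x)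
      ((coordCD hc j).differentiable one_ne_zero x)]
    simp only [ContinuousLinearMap.add_apply, ContinuousLinearMap.smul_apply, smul_eq_mul]
    rw [coordFD hbd j x, coordFD hcd j x]
    ring
  have key := divergence_int_zero ha hca hda hfCD hfCS
  have hsplit : ∀ x : E, ∑ i, a x i * fderiv ℝ f x (EuclideanSpace.single i 1)
      = (∑ i, ∑ j, a x i * fderiv ℝ b x (EuclideanSpace.single i 1) j * c x j)
        + (∑ i, ∑ j, a x i * fderiv ℝ c x (EuclideanSpace.single i 1) j * b x j) := by
    intro x
    rw [← Finset.sum_add_distrib]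
    refine Finset.sum_congr rfl fun i _ => ?_
    rw [hdf x i, Finset.mul_sum, ← Finset.sum_add_distrib]
    refine Finset.sum_congr rfl fun j _ => by ring
  rw [integral_congr_ae (Filter.Eventually.of_forall hsplit),
    integral_add (bIntegrable ha hb hc hca) (bIntegrable ha hc hb hca)] at key
  linarith [key]

lemma young_aux {s G B : ℝ} (μ : ℝ) (hμ : 0 < μ) (hG : 0 ≤ G) (hB : 0 ≤ B)
    (hs : s^2 ≤ B * G) : s ≤ μ * G + (1/(4*μ)) * B := by
  have h4 : (0:ℝ) < 4*μ := by linarith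
  have key : 4*μ*s ≤ 4*μ^2*G + B := by
    rcases le_or_gt s 0 with h|h
    · nlinarith [mul_pos hμ hμ]
    · by_contra hcon
      push_neg at hcon
      have h0 : (0:ℝ) ≤ 4*μ^2*G + B := by positivity
      have hsq : (4*μ^2*G + B)^2 < (4*μ*s)^2 := by
        apply pow_lt_pow_left₀ hcon h0 (by norm_num)
      nlinarith [mul_le_mul_of_nonneg_left hs (by positivity : (0:ℝ) ≤ 16*μ^2),
        sq_nonneg (4*μ^2*G - B)]
  rw [← sub_nonneg]
  have hexp : μ * G + 1/(4*μ) * B - s = (4*μ^2*G + B - 4*μ*s)/(4*μ) := by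
    field_simp
  rw [hexp]
  exact div_nonneg (by linarith) h4.le

lemma mono_pointwise (s t : E) :
    (1/2 : ℝ) * (‖t‖^2 * ‖s - t‖^2) ≤ ⟪(‖s‖^2 : ℝ) • s - (‖t‖^2 : ℝ) • t, s - t⟫ := by
  have hcs : ⟪s, t⟫ ≤ ‖s‖ * ‖t‖ := real_inner_le_norm s t
  have hexp : ⟪(‖s‖^2 : ℝ) • s - (‖t‖^2 : ℝ) • t, s - t⟫
      = ‖s‖^2*‖s‖^2 + ‖t‖^2*‖t‖^2 - (‖s‖^2 + ‖t‖^2) * ⟪s,t⟫ := by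
    simp only [inner_sub_left, inner_sub_right, real_inner_smul_left,
      real_inner_self_eq_norm_sq, real_inner_comm t s]
    ring
  have hns : ‖s - t‖^2 = ‖s‖^2 - 2*⟪s,t⟫ + ‖t‖^2 := by
    rw [norm_sub_sq_real]
  nlinarith [norm_nonneg s, norm_nonneg t,
    mul_nonneg (mul_nonneg (norm_nonneg s) (norm_nonneg s)) (sub_nonneg.2 hcs),
    mul_nonneg (sq_nonneg (‖s‖ - ‖t‖))
      (by positivity : (0:ℝ) ≤ 2*‖s‖^2 + 2*‖s‖*‖t‖ + ‖t‖^2)]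

lemma cs_pointwise {w v : E → E} (x : E) :
    (∑ i, ∑ j, w x i * fderiv ℝ w x (EuclideanSpace.single i 1) j * v x j)^2
      ≤ (‖v x‖^2 * ‖w x‖^2) *
        (∑ i, ∑ j, (fderiv ℝ w x (EuclideanSpace.single i 1) j) ^ 2) := by
  set F : Fin n × Fin n → ℝ := fun p => w x p.1 * v x p.2 with hF
  set G0 : Fin n × Fin n → ℝ := fun p => fderiv ℝ w x (EuclideanSpace.single p.1 1) p.2 with hG0
  have h1 : (∑ i, ∑ j, w x i * fderiv ℝ w x (EuclideanSpace.single i 1) j * v x j)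
      = ∑ p : Fin n × Fin n, F p * G0 p := by
    rw [Fintype.sum_prod_type]
    exact Finset.sum_congr rfl fun i _ => Finset.sum_congr rfl fun j _ => by
      simp only [hF, hG0]; ring
  have h2 : (∑ p : Fin n × Fin n, F p ^ 2) = ‖v x‖^2 * ‖w x‖^2 := by
    rw [Fintype.sum_prod_type]
    calc ∑ i, ∑ j, F (i, j) ^ 2
        = ∑ i, ∑ j, (w x i ^ 2) * (v x j ^ 2) :=
          Finset.sum_congr rfl fun i _ => Finset.sum_congr rfl fun j _ => by
            simp only [hF]; ring
      _ = (∑ i, w x i ^ 2) * (∑ j, v x j ^ 2) := (Finset.sum_mul_sum _ _ _ _).symm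
      _ = ‖v x‖^2 * ‖w x‖^2 := by rw [← normSq, ← normSq, mul_comm]
  have h3 : (∑ p : Fin n × Fin n, G0 p ^ 2)
      = ∑ i, ∑ j, (fderiv ℝ w x (EuclideanSpace.single i 1) j) ^ 2 := by
    rw [Fintype.sum_prod_type]
  have := Finset.sum_mul_sq_le_sq_mul_sq Finset.univ F G0
  rw [h1]
  calc (∑ p : Fin n × Fin n, F p * G0 p)^2
      ≤ (∑ p : Fin n × Fin n, F p ^ 2) * (∑ p : Fin n × Fin n, G0 p ^ 2) := this
    _ = _ := by rw [h2, h3]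

end NSproof

/-- Theorem 2.3: global monotonicity of the convective Brinkman–Forchheimer operator
in the critical case `r = 3`, assuming `2βμ ≥ 1`. -/
theorem global_monotonicity_critical (n : ℕ) (hn : 2 ≤ n) (μ β : ℝ)
    (hμ : 0 < μ) (hβ : 0 < β) (hβμ : 1 ≤ 2 * β * μ)
    (u v : EuclideanSpace ℝ (Fin n) → EuclideanSpace ℝ (Fin n))
    (hu : ContDiff ℝ 1 u) (hcu : HasCompactSupport u)
    (hdu : ∀ x, ∑ i, fderiv ℝ u x (EuclideanSpace.single i 1) i = 0)
    (hv : ContDiff ℝ 1 v) (hcv : HasCompactSupport v)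
    (hdv : ∀ x, ∑ i, fderiv ℝ v x (EuclideanSpace.single i 1) i = 0) :
    (1 / 2) * (β - 1 / (2 * μ)) * (∫ x, ‖v x‖ ^ 2 * ‖u x - v x‖ ^ 2) ≤
      μ * (∫ x, gradSq n (u - v) x)
        + (bForm n u u (u - v) - bForm n v v (u - v))
        + β * (∫ x, ⟪(‖u x‖ ^ 2 : ℝ) • u x - (‖v x‖ ^ 2 : ℝ) • v x, u x - v x⟫)
    ∧ 0 ≤ (1 / 2) * (β - 1 / (2 * μ)) * (∫ x, ‖v x‖ ^ 2 * ‖u x - v x‖ ^ 2) := by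
  have hud : Differentiable ℝ u := hu.differentiable one_ne_zero
  have hvd : Differentiable ℝ v := hv.differentiable one_ne_zero
  set w : EuclideanSpace ℝ (Fin n) → EuclideanSpace ℝ (Fin n) := u - v with hw_def
  have hwx : ∀ x, w x = u x - v x := fun x => rfl
  have hwxj : ∀ (x : EuclideanSpace ℝ (Fin n)) (j : Fin n), w x j = u x j - v x j :=
    fun x j => rfl
  have hwCD : ContDiff ℝ 1 w := hu.sub hv
  have hwd : Differentiable ℝ w := hwCD.differentiable one_ne_zero
  have hcw : HasCompactSupport w := by
    apply HasCompactSupport.intro (hcu.union hcv)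
    intro x hx
    simp only [Set.mem_union, not_or] at hx
    rw [hwx, image_eq_zero_of_notMem_tsupport hx.1, image_eq_zero_of_notMem_tsupport hx.2,
      sub_zero]
  have hfw : ∀ x, fderiv ℝ w x = fderiv ℝ u x - fderiv ℝ v x := by
    intro x
    exact fderiv_sub (hud x) (hvd x)
  have hfwx : ∀ (x : EuclideanSpace ℝ (Fin n)) (i j : Fin n),
      fderiv ℝ w x (EuclideanSpace.single i 1) j
        = fderiv ℝ u x (EuclideanSpace.single i 1) j
          - fderiv ℝ v x (EuclideanSpace.single i 1) j := by
    intro x i j; rw [hfw x]; rfl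
  have hdw : ∀ x, ∑ i, fderiv ℝ w x (EuclideanSpace.single i 1) i = 0 := by
    intro x
    rw [Finset.sum_congr rfl fun i _ => hfwx x i i, Finset.sum_sub_distrib, hdu x, hdv x,
      sub_zero]
  -- integrability facts
  have intG : Integrable (fun x => gradSq n w x) := by
    apply Continuous.integrable_of_hasCompactSupport
    · exact continuous_finset_sum _ fun i _ => continuous_finset_sum _ fun j _ =>
        (NSproof.contFDvec hwCD _ j).pow 2
    · exact NSproof.hcsFactor ((hcw.fderiv (𝕜 := ℝ))) (fun x hx => by simp [gradSq, hx])
  have intB : Integrable (fun x => ‖v x‖ ^ 2 * ‖u x - v x‖ ^ 2) := by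
    apply Continuous.integrable_of_hasCompactSupport
    · exact ((hv.continuous.norm.pow 2).mul ((hu.continuous.sub hv.continuous).norm.pow 2))
    · exact NSproof.hcsFactor hcv (fun x hx => by simp [hx])
  have intM : Integrable
      (fun x => ⟪(‖u x‖ ^ 2 : ℝ) • u x - (‖v x‖ ^ 2 : ℝ) • v x, u x - v x⟫) := by
    apply Continuous.integrable_of_hasCompactSupport
    · exact Continuous.inner
        (((hu.continuous.norm.pow 2).smul hu.continuous).sub
          ((hv.continuous.norm.pow 2).smul hv.continuous))
        (hu.continuous.sub hv.continuous)
    · apply HasCompactSupport.intro (hcu.union hcv)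
      intro x hx
      simp only [Set.mem_union, not_or] at hx
      rw [image_eq_zero_of_notMem_tsupport hx.1, image_eq_zero_of_notMem_tsupport hx.2]
      simp
  -- splitting of the trilinear terms
  have hsplit : bForm n u u w - bForm n v v w = bForm n u w w + bForm n w v w := by
    unfold bForm
    rw [← integral_sub (NSproof.bIntegrable hu hu hwCD hcu)
        (NSproof.bIntegrable hv hv hwCD hcv),
      ← integral_add (NSproof.bIntegrable hu hwCD hwCD hcu)
        (NSproof.bIntegrable hwCD hv hwCD hcw)]
    apply integral_congr_ae
    apply Filter.Eventually.of_forall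
    intro x
    simp only [hwxj, hfwx]
    rw [← Finset.sum_sub_distrib, ← Finset.sum_add_distrib]
    refine Finset.sum_congr rfl fun i _ => ?_
    rw [← Finset.sum_sub_distrib, ← Finset.sum_add_distrib]
    exact Finset.sum_congr rfl fun j _ => by ring
  have h1 : bForm n u w w = 0 := by
    have h := NSproof.antisymm hu hcu hdu hwCD hcw hwCD hcw
    unfold bForm
    linarith [h]
  have h2 : bForm n w v w = - bForm n w w v := by
    have h := NSproof.antisymm hwCD hcw hdw hv hcv hwCD hcw
    unfold bForm at *
    linarith [h]
  -- estimate on b(w,w,v)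
  have h3 : bForm n w w v ≤ μ * (∫ x, gradSq n w x)
      + (1/(4*μ)) * (∫ x, ‖v x‖ ^ 2 * ‖u x - v x‖ ^ 2) := by
    have hpt : ∀ x, (∑ i, ∑ j, w x i * fderiv ℝ w x (EuclideanSpace.single i 1) j * v x j)
        ≤ μ * gradSq n w x + (1/(4*μ)) * (‖v x‖ ^ 2 * ‖u x - v x‖ ^ 2) := by
      intro x
      apply NSproof.young_aux μ hμ
      · exact Finset.sum_nonneg fun i _ => Finset.sum_nonneg fun j _ => sq_nonneg _
      · positivity
      · have h := NSproof.cs_pointwise (w := w) (v := v) x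
        have hnw : ‖w x‖ = ‖u x - v x‖ := by rw [hwx]
        rw [hnw] at h
        simpa [gradSq] using h
    calc bForm n w w v
        ≤ ∫ x, (μ * gradSq n w x + (1/(4*μ)) * (‖v x‖ ^ 2 * ‖u x - v x‖ ^ 2)) := by
          unfold bForm
          exact integral_mono (NSproof.bIntegrable hwCD hwCD hv hcw)
            ((intG.const_mul μ).add (intB.const_mul _)) hpt
      _ = μ * (∫ x, gradSq n w x)
          + (1/(4*μ)) * (∫ x, ‖v x‖ ^ 2 * ‖u x - v x‖ ^ 2) := by
          rw [integral_add (intG.const_mul μ) (intB.const_mul _), integral_const_mul,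
            integral_const_mul]
  -- the monotonicity (absorption) term
  have h5 : (1/2 : ℝ) * (∫ x, ‖v x‖ ^ 2 * ‖u x - v x‖ ^ 2)
      ≤ ∫ x, ⟪(‖u x‖ ^ 2 : ℝ) • u x - (‖v x‖ ^ 2 : ℝ) • v x, u x - v x⟫ := by
    rw [← integral_const_mul]
    exact integral_mono (intB.const_mul _) intM
      (fun x => by simpa using NSproof.mono_pointwise (u x) (v x))
  have hB0 : 0 ≤ ∫ x, ‖v x‖ ^ 2 * ‖u x - v x‖ ^ 2 :=
    integral_nonneg (fun x => by positivity)
  have hcoef : 1/(2*μ) ≤ β := by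
    rw [div_le_iff₀ (by linarith : (0:ℝ) < 2*μ)]
    linarith
  constructor
  · have hb : bForm n u u w - bForm n v v w = - bForm n w w v := by
      rw [hsplit, h1, zero_add, h2]
    set IB := ∫ x, ‖v x‖ ^ 2 * ‖u x - v x‖ ^ 2 with hIB
    set IG := ∫ x, gradSq n w x with hIG
    set IM := ∫ x, ⟪(‖u x‖ ^ 2 : ℝ) • u x - (‖v x‖ ^ 2 : ℝ) • v x, u x - v x⟫ with hIM
    have hM2 : β * ((1/2 : ℝ) * IB) ≤ β * IM := mul_le_mul_of_nonneg_left h5 hβ.le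
    have hco : (1/2) * (β - 1 / (2 * μ)) * IB = β * ((1/2 : ℝ) * IB) - (1/(4*μ)) * IB := by
      field_simp
      ring
    rw [hb, hco]
    linarith [h3]
  · apply mul_nonneg
    · apply mul_nonneg (by norm_num)
      linarith
    · exact hB0
end

section
/- Strengthened pointwise monotonicity of the Forchheimer nonlinearity (pointwise form of inequality (2.23) of the paper). Let E be a real inner product space and r ≥ 1 a real number. Then for all a, b ∈ E, ⟨ ‖a‖^{r−1} a − ‖b‖^{r−1} b , a − b ⟩ ≥ (1/2) ‖a‖^{r−1} ‖a − b‖² + (1/2) ‖b‖^{r−1} ‖a − b‖² ≥ 0. -/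
open scoped RealInnerProductSpace

/-- Strengthened pointwise monotonicity of the Forchheimer nonlinearity
(pointwise form of inequality (2.23)): for `r ≥ 1` and `a, b` in a real inner product space,
`⟨‖a‖^{r−1} a − ‖b‖^{r−1} b, a − b⟩ ≥ (1/2)‖a‖^{r−1}‖a−b‖² + (1/2)‖b‖^{r−1}‖a−b‖² ≥ 0`. -/
theorem forchheimer_pointwise_strong_monotone
    {E : Type*} [NormedAddCommGroup E] [InnerProductSpace ℝ E]
    (r : ℝ) (hr : 1 ≤ r) (a b : E) :
    (1 / 2) * ‖a‖ ^ (r - 1) * ‖a - b‖ ^ 2 + (1 / 2) * ‖b‖ ^ (r - 1) * ‖a - b‖ ^ 2 ≤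
      ⟪(‖a‖ ^ (r - 1)) • a - (‖b‖ ^ (r - 1)) • b, a - b⟫
    ∧ 0 ≤ (1 / 2) * ‖a‖ ^ (r - 1) * ‖a - b‖ ^ 2 + (1 / 2) * ‖b‖ ^ (r - 1) * ‖a - b‖ ^ 2 := by
  have hre : (0:ℝ) ≤ r - 1 := by linarith
  have ha : (0:ℝ) ≤ ‖a‖ ^ (r - 1) := Real.rpow_nonneg (norm_nonneg a) _
  have hb : (0:ℝ) ≤ ‖b‖ ^ (r - 1) := Real.rpow_nonneg (norm_nonneg b) _
  have hsq : (0:ℝ) ≤ ‖a - b‖ ^ 2 := sq_nonneg _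
  refine ⟨?_, by positivity⟩
  -- key sign fact
  have key : 0 ≤ (‖a‖ ^ (r - 1) - ‖b‖ ^ (r - 1)) * (‖a‖ ^ 2 - ‖b‖ ^ 2) := by
    rcases le_total ‖a‖ ‖b‖ with h | h
    · have h1 : ‖a‖ ^ (r - 1) ≤ ‖b‖ ^ (r - 1) :=
        Real.rpow_le_rpow (norm_nonneg a) h hre
      have h2 : ‖a‖ ^ 2 ≤ ‖b‖ ^ 2 := by nlinarith [norm_nonneg a, norm_nonneg b]
      nlinarith
    · have h1 : ‖b‖ ^ (r - 1) ≤ ‖a‖ ^ (r - 1) :=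
        Real.rpow_le_rpow (norm_nonneg b) h hre
      have h2 : ‖b‖ ^ 2 ≤ ‖a‖ ^ 2 := by nlinarith [norm_nonneg a, norm_nonneg b]
      nlinarith
  have hexp : ‖a - b‖ ^ 2 = ‖a‖ ^ 2 - 2 * ⟪a, b⟫ + ‖b‖ ^ 2 := norm_sub_sq_real a b
  have hin : ⟪(‖a‖ ^ (r - 1)) • a - (‖b‖ ^ (r - 1)) • b, a - b⟫ =
      ‖a‖ ^ (r - 1) * ‖a‖ ^ 2 + ‖b‖ ^ (r - 1) * ‖b‖ ^ 2
        - (‖a‖ ^ (r - 1) + ‖b‖ ^ (r - 1)) * ⟪a, b⟫ := by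
    simp [inner_sub_left, inner_sub_right, real_inner_smul_left,
      real_inner_self_eq_norm_sq, real_inner_comm a b]
    ring
  rw [hin, hexp]
  nlinarith [key]
end

section
/- Local Lipschitz estimate for the Forchheimer nonlinearity from L^{r+1} to L^{(r+1)/r} (inequality (2.13)/(213) of the paper). Let (X, 𝔪) be a measure space, E a real inner product space, and r ≥ 1 a real number. If u, v ∈ L^{r+1}(𝔪; E), then the function Φ(x) = ‖u(x)‖^{r−1} u(x) − ‖v(x)‖^{r−1} v(x) belongs to L^{(r+1)/r}(𝔪; E) and ‖Φ‖_{L^{(r+1)/r}} ≤ r ( ‖u‖_{L^{r+1}} + ‖v‖_{L^{r+1}} )^{r−1} ‖u − v‖_{L^{r+1}}. -/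
open MeasureTheory Real
open scoped ENNReal

lemma forch_bern_ge {s t q : ℝ} (hs : 0 < s) (ht : 0 ≤ t) (hq : 1 ≤ q) :
    s ^ q + q * s ^ (q - 1) * (t - s) ≤ t ^ q := by
  have hx : -1 ≤ t / s - 1 := by
    have : 0 ≤ t / s := div_nonneg ht hs.le
    linarith
  have hB := one_add_mul_self_le_rpow_one_add hx hq
  rw [show (1 : ℝ) + (t / s - 1) = t / s by ring, Real.div_rpow ht hs.le] at hB
  have hsq : (0:ℝ) < s ^ q := Real.rpow_pos_of_pos hs q
  have h2 := mul_le_mul_of_nonneg_left hB hsq.le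
  have h3 : s ^ q * (t ^ q / s ^ q) = t ^ q := by field_simp
  rw [h3] at h2
  have h4 : s ^ (q - 1) = s ^ q / s := by rw [Real.rpow_sub hs, Real.rpow_one]
  have h5 : s ^ q * (1 + q * (t / s - 1)) = s ^ q + q * (s ^ q / s) * (t - s) := by
    field_simp
  rw [h4]
  linarith [h5 ▸ h2]

lemma forch_bern_le {s t q : ℝ} (ht : 0 < t) (hs : 0 ≤ s) (hq0 : 0 ≤ q) (hq1 : q ≤ 1) :
    s ^ q ≤ t ^ q + q * t ^ (q - 1) * (s - t) := by
  have hx : -1 ≤ s / t - 1 := by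
    have : 0 ≤ s / t := div_nonneg hs ht.le
    linarith
  have hB := rpow_one_add_le_one_add_mul_self hx hq0 hq1
  rw [show (1 : ℝ) + (s / t - 1) = s / t by ring, Real.div_rpow hs ht.le] at hB
  have htq : (0:ℝ) < t ^ q := Real.rpow_pos_of_pos ht q
  have h2 := mul_le_mul_of_nonneg_left hB htq.le
  have h3 : t ^ q * (s ^ q / t ^ q) = s ^ q := by field_simp
  rw [h3] at h2
  have h4 : t ^ (q - 1) = t ^ q / t := by rw [Real.rpow_sub ht, Real.rpow_one]
  have h5 : t ^ q * (1 + q * (s / t - 1)) = t ^ q + q * (t ^ q / t) * (s - t) := by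
    field_simp
  rw [h4]
  linarith [h5 ▸ h2]

lemma forch_scalar {q s t : ℝ} (hq : 0 ≤ q) (ht : 0 ≤ t) (hts : t ≤ s) :
    (s ^ q - t ^ q) * t ≤ q * (s + t) ^ q * (s - t) := by
  rcases eq_or_lt_of_le hq with rfl | hq
  · simp
  rcases eq_or_lt_of_le ht with rfl | ht
  · simp only [sub_zero, mul_zero, add_zero]
    positivity
  have hs : 0 < s := lt_of_lt_of_le ht hts
  have hst : (0:ℝ) < s + t := by linarith
  have hmono : t ^ q ≤ s ^ q := Real.rpow_le_rpow ht.le hts hq.le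
  rcases le_or_gt 1 q with h1 | h1
  · have key : s ^ q - t ^ q ≤ q * s ^ (q - 1) * (s - t) := by
      have := forch_bern_ge hs ht.le h1
      nlinarith
    calc (s ^ q - t ^ q) * t ≤ (q * s ^ (q - 1) * (s - t)) * t :=
          mul_le_mul_of_nonneg_right key ht.le
      _ ≤ (q * s ^ (q - 1) * (s - t)) * s := by
          have h0 : 0 ≤ q * s ^ (q - 1) * (s - t) := by
            have : (0:ℝ) ≤ s ^ (q-1) := Real.rpow_nonneg hs.le _
            nlinarith
          nlinarith [Real.rpow_nonneg hs.le (q-1)]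
      _ = q * (s ^ (q - 1) * s) * (s - t) := by ring
      _ = q * s ^ q * (s - t) := by
          rw [← Real.rpow_add_one hs.ne' (q - 1)]; ring_nf
      _ ≤ q * (s + t) ^ q * (s - t) := by
          have h6 : s ^ q ≤ (s + t) ^ q := Real.rpow_le_rpow hs.le (by linarith) hq.le
          nlinarith [mul_nonneg (mul_nonneg hq.le (sub_nonneg.mpr hts)) (sub_nonneg.mpr h6)]
  · have key : s ^ q - t ^ q ≤ q * t ^ (q - 1) * (s - t) := by
      have := forch_bern_le ht hs.le hq.le h1.le
      nlinarith
    calc (s ^ q - t ^ q) * t ≤ (q * t ^ (q - 1) * (s - t)) * t :=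
          mul_le_mul_of_nonneg_right key ht.le
      _ = q * (t ^ (q - 1) * t) * (s - t) := by ring
      _ = q * t ^ q * (s - t) := by
          rw [← Real.rpow_add_one ht.ne' (q - 1)]; ring_nf
      _ ≤ q * (s + t) ^ q * (s - t) := by
          have h6 : t ^ q ≤ (s + t) ^ q := Real.rpow_le_rpow ht.le (by linarith) hq.le
          nlinarith [mul_nonneg (mul_nonneg hq.le (sub_nonneg.mpr hts)) (sub_nonneg.mpr h6)]

lemma forch_pointwise_aux {E : Type*} [NormedAddCommGroup E] [NormedSpace ℝ E]
    {r : ℝ} (hr : 1 ≤ r) {a b : E} (hba : ‖b‖ ≤ ‖a‖) :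
    ‖(‖a‖ ^ (r - 1)) • a - (‖b‖ ^ (r - 1)) • b‖ ≤ r * (‖a‖ + ‖b‖) ^ (r - 1) * ‖a - b‖ := by
  have hq : 0 ≤ r - 1 := by linarith
  have key := forch_scalar hq (norm_nonneg b) hba
  have hmono : ‖b‖ ^ (r-1) ≤ ‖a‖ ^ (r-1) :=
    Real.rpow_le_rpow (norm_nonneg b) hba hq
  have hid : (‖a‖ ^ (r-1)) • a - (‖b‖ ^ (r-1)) • b
      = (‖a‖ ^ (r-1)) • (a - b) + (‖a‖ ^ (r-1) - ‖b‖ ^ (r-1)) • b := by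
    rw [smul_sub, sub_smul]; abel
  rw [hid]
  have hS : ‖a‖ ^ (r-1) ≤ (‖a‖ + ‖b‖) ^ (r-1) :=
    Real.rpow_le_rpow (norm_nonneg a) (by linarith [norm_nonneg b]) hq
  calc ‖(‖a‖ ^ (r-1)) • (a - b) + (‖a‖ ^ (r-1) - ‖b‖ ^ (r-1)) • b‖
      ≤ ‖(‖a‖ ^ (r-1)) • (a - b)‖ + ‖(‖a‖ ^ (r-1) - ‖b‖ ^ (r-1)) • b‖ := norm_add_le _ _
    _ = ‖a‖ ^ (r-1) * ‖a - b‖ + (‖a‖ ^ (r-1) - ‖b‖ ^ (r-1)) * ‖b‖ := by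
        rw [norm_smul, norm_smul, Real.norm_eq_abs, Real.norm_eq_abs,
          abs_of_nonneg (Real.rpow_nonneg (norm_nonneg a) _),
          abs_of_nonneg (sub_nonneg.mpr hmono)]
    _ ≤ (‖a‖ + ‖b‖) ^ (r-1) * ‖a - b‖ + (r-1) * (‖a‖ + ‖b‖) ^ (r-1) * (‖a‖ - ‖b‖) :=
        add_le_add (mul_le_mul_of_nonneg_right hS (norm_nonneg _)) key
    _ ≤ (‖a‖ + ‖b‖) ^ (r-1) * ‖a - b‖ + (r-1) * (‖a‖ + ‖b‖) ^ (r-1) * ‖a - b‖ :=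
        add_le_add_right (mul_le_mul_of_nonneg_left (norm_sub_norm_le a b)
          (mul_nonneg hq (Real.rpow_nonneg (by positivity) _))) _
    _ = r * (‖a‖ + ‖b‖) ^ (r-1) * ‖a - b‖ := by ring

lemma forch_pointwise {E : Type*} [NormedAddCommGroup E] [NormedSpace ℝ E]
    {r : ℝ} (hr : 1 ≤ r) (a b : E) :
    ‖(‖a‖ ^ (r - 1)) • a - (‖b‖ ^ (r - 1)) • b‖ ≤ r * (‖a‖ + ‖b‖) ^ (r - 1) * ‖a - b‖ := by
  rcases le_total ‖b‖ ‖a‖ with h | h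
  · exact forch_pointwise_aux hr h
  · calc ‖(‖a‖ ^ (r - 1)) • a - (‖b‖ ^ (r - 1)) • b‖
        = ‖(‖b‖ ^ (r - 1)) • b - (‖a‖ ^ (r - 1)) • a‖ := norm_sub_rev _ _
      _ ≤ r * (‖b‖ + ‖a‖) ^ (r - 1) * ‖b - a‖ := forch_pointwise_aux hr h
      _ = r * (‖a‖ + ‖b‖) ^ (r - 1) * ‖a - b‖ := by rw [add_comm, norm_sub_rev]

lemma ofReal_norm_eq_coe_nnnorm {E : Type*} [SeminormedAddCommGroup E] (a : E) :
    ENNReal.ofReal ‖a‖ = (‖a‖₊ : ℝ≥0∞) := ofReal_norm a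

lemma eLpNorm_eq_lintegral_rpow_nnnorm {X : Type*} [MeasurableSpace X] {m : Measure X}
    {E : Type*} [NormedAddCommGroup E] {f : X → E} {p : ℝ≥0∞} (h0 : p ≠ 0) (htop : p ≠ ∞) :
    eLpNorm f p m = (∫⁻ x, (‖f x‖₊ : ℝ≥0∞) ^ p.toReal ∂m) ^ (1 / p.toReal) :=
  eLpNorm_eq_lintegral_rpow_enorm_toReal h0 htop

lemma forch_integral_eq {X : Type*} [MeasurableSpace X] {m : Measure X}
    {E : Type*} [NormedAddCommGroup E] {f : X → E}
    (hf : AEStronglyMeasurable f m) {e : ℝ} (he : 0 ≤ e) :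
    ∫ x, ‖f x‖ ^ e ∂m = (∫⁻ x, (‖f x‖₊ : ℝ≥0∞) ^ e ∂m).toReal := by
  rw [integral_eq_lintegral_of_nonneg_ae
      (Filter.Eventually.of_forall fun x => Real.rpow_nonneg (norm_nonneg _) _)
      ((hf.norm.aemeasurable.pow_const e).aestronglyMeasurable)]
  congr 1
  refine lintegral_congr fun x => ?_
  rw [← ofReal_norm_eq_coe_nnnorm, ENNReal.ofReal_rpow_of_nonneg (norm_nonneg _) he]

lemma forch_fin {X : Type*} [MeasurableSpace X] {m : Measure X}
    {E : Type*} [NormedAddCommGroup E] {f : X → E} {e : ℝ} (he : 0 < e)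
    (hf : MemLp f (ENNReal.ofReal e) m) :
    ∫⁻ x, (‖f x‖₊ : ℝ≥0∞) ^ e ∂m ≠ ∞ := by
  have h := hf.2
  rw [eLpNorm_eq_lintegral_rpow_nnnorm (by simp [he]) ENNReal.ofReal_ne_top,
    ENNReal.toReal_ofReal he.le] at h
  have := (ENNReal.rpow_lt_top_iff_of_pos (y := 1 / e) (by positivity)).mp h
  exact this.ne

/-- Local Lipschitz estimate for the Forchheimer nonlinearity from `L^{r+1}` to `L^{(r+1)/r}`
(inequality (2.13)): for `r ≥ 1` and `u, v ∈ L^{r+1}(𝔪; E)`, the function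
`Φ(x) = ‖u x‖^{r−1} u x − ‖v x‖^{r−1} v x` belongs to `L^{(r+1)/r}(𝔪; E)` and
`‖Φ‖_{L^{(r+1)/r}} ≤ r (‖u‖_{L^{r+1}} + ‖v‖_{L^{r+1}})^{r−1} ‖u − v‖_{L^{r+1}}`. -/
theorem forchheimer_local_lipschitz
    {X : Type*} [MeasurableSpace X] (m : Measure X)
    {E : Type*} [NormedAddCommGroup E] [InnerProductSpace ℝ E]
    (r : ℝ) (hr : 1 ≤ r) (u v : X → E)
    (hu : MemLp u (ENNReal.ofReal (r + 1)) m)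
    (hv : MemLp v (ENNReal.ofReal (r + 1)) m) :
    MemLp (fun x => (‖u x‖ ^ (r - 1)) • u x - (‖v x‖ ^ (r - 1)) • v x)
      (ENNReal.ofReal ((r + 1) / r)) m
    ∧ (∫ x, ‖(‖u x‖ ^ (r - 1)) • u x - (‖v x‖ ^ (r - 1)) • v x‖ ^ ((r + 1) / r) ∂m)
        ^ (r / (r + 1)) ≤
      r * ((∫ x, ‖u x‖ ^ (r + 1) ∂m) ^ (1 / (r + 1))
            + (∫ x, ‖v x‖ ^ (r + 1) ∂m) ^ (1 / (r + 1))) ^ (r - 1)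
        * (∫ x, ‖u x - v x‖ ^ (r + 1) ∂m) ^ (1 / (r + 1)) := by
  have hr0 : (0:ℝ) < r := lt_of_lt_of_le one_pos hr
  have hp1 : (0:ℝ) < r + 1 := by linarith
  have hp'0 : (0:ℝ) < (r + 1) / r := by positivity
  have huA := hu.aestronglyMeasurable
  have hvA := hv.aestronglyMeasurable
  have hcont : Continuous (fun a : E => (‖a‖ ^ (r - 1)) • a) :=
    (continuous_norm.rpow_const (fun a => Or.inr (by linarith))).smul continuous_id
  have hΦA : AEStronglyMeasurable
      (fun x => (‖u x‖ ^ (r - 1)) • u x - (‖v x‖ ^ (r - 1)) • v x) m :=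
    ((hcont.comp_aestronglyMeasurable huA).sub (hcont.comp_aestronglyMeasurable hvA))
  have hwA : AEStronglyMeasurable (fun x => u x - v x) m := huA.sub hvA
  set A := ∫⁻ x, (‖(‖u x‖ ^ (r - 1)) • u x - (‖v x‖ ^ (r - 1)) • v x‖₊ : ℝ≥0∞) ^ ((r+1)/r) ∂m
    with hAdef
  set IU := ∫⁻ x, (‖u x‖₊ : ℝ≥0∞) ^ (r+1) ∂m with hIUdef
  set IV := ∫⁻ x, (‖v x‖₊ : ℝ≥0∞) ^ (r+1) ∂m with hIVdef
  set IH := ∫⁻ x, (‖u x - v x‖₊ : ℝ≥0∞) ^ (r+1) ∂m with hIHdef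
  have hIUfin : IU ≠ ∞ := forch_fin hp1 hu
  have hIVfin : IV ≠ ∞ := forch_fin hp1 hv
  have hIHfin : IH ≠ ∞ := forch_fin hp1 (hu.sub hv)
  have hmain : A ≠ ∞ ∧ A ^ (r / (r+1)) ≤
      ENNReal.ofReal r * (IU ^ (1/(r+1)) + IV ^ (1/(r+1))) ^ (r-1) * IH ^ (1/(r+1)) := by
    have hIUr : IU ^ (1/(r+1)) ≠ ∞ := ENNReal.rpow_ne_top_of_nonneg (by positivity) hIUfin
    have hIVr : IV ^ (1/(r+1)) ≠ ∞ := ENNReal.rpow_ne_top_of_nonneg (by positivity) hIVfin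
    rcases eq_or_lt_of_le hr with heq | hlt
    · -- the case r = 1
      subst heq
      have hAeq : A = IH := by
        rw [hAdef, hIHdef]
        refine lintegral_congr fun x => ?_
        norm_num [Real.rpow_zero]
      refine ⟨hAeq ▸ hIHfin, ?_⟩
      rw [hAeq]
      norm_num [ENNReal.rpow_zero, ENNReal.ofReal_one]
    · -- the case 1 < r
      have hq0 : (0:ℝ) < r - 1 := by linarith
      have hGm : AEMeasurable (fun x => ((‖u x‖₊ : ℝ≥0∞) + ‖v x‖₊)) m :=
        huA.enorm.add hvA.enorm
      have hHm : AEMeasurable (fun x => (‖u x - v x‖₊ : ℝ≥0∞)) m := hwA.enorm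
      have hptw : ∀ x, (‖(‖u x‖ ^ (r - 1)) • u x - (‖v x‖ ^ (r - 1)) • v x‖₊ : ℝ≥0∞)
          ≤ ENNReal.ofReal r * ((‖u x‖₊ : ℝ≥0∞) + ‖v x‖₊) ^ (r-1) * ‖u x - v x‖₊ := by
        intro x
        rw [← ofReal_norm_eq_coe_nnnorm]
        refine le_trans (ENNReal.ofReal_le_ofReal (forch_pointwise hr (u x) (v x)))
          (le_of_eq ?_)
        rw [ENNReal.ofReal_mul (by positivity), ENNReal.ofReal_mul hr0.le,
          ← ENNReal.ofReal_rpow_of_nonneg (by positivity) (by linarith : (0:ℝ) ≤ r - 1),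
          ENNReal.ofReal_add (norm_nonneg _) (norm_nonneg _),
          ofReal_norm_eq_coe_nnnorm, ofReal_norm_eq_coe_nnnorm, ofReal_norm_eq_coe_nnnorm]
      have h1 : A ≤ ENNReal.ofReal r ^ ((r+1)/r) *
          ∫⁻ x, ((‖u x‖₊ : ℝ≥0∞) + ‖v x‖₊) ^ ((r-1) * ((r+1)/r))
            * (‖u x - v x‖₊ : ℝ≥0∞) ^ ((r+1)/r) ∂m := by
        rw [hAdef]
        calc (∫⁻ x, (‖(‖u x‖ ^ (r - 1)) • u x - (‖v x‖ ^ (r - 1)) • v x‖₊ : ℝ≥0∞)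
                ^ ((r+1)/r) ∂m)
            ≤ ∫⁻ x, (ENNReal.ofReal r * ((‖u x‖₊ : ℝ≥0∞) + ‖v x‖₊) ^ (r-1)
                * (‖u x - v x‖₊ : ℝ≥0∞)) ^ ((r+1)/r) ∂m :=
              lintegral_mono fun x => ENNReal.rpow_le_rpow (hptw x) hp'0.le
          _ = ∫⁻ x, ENNReal.ofReal r ^ ((r+1)/r) *
                (((‖u x‖₊ : ℝ≥0∞) + ‖v x‖₊) ^ ((r-1)*((r+1)/r))
                  * (‖u x - v x‖₊ : ℝ≥0∞) ^ ((r+1)/r)) ∂m := by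
              refine lintegral_congr fun x => ?_
              rw [ENNReal.mul_rpow_of_nonneg _ _ hp'0.le,
                ENNReal.mul_rpow_of_nonneg _ _ hp'0.le, ← ENNReal.rpow_mul, mul_assoc]
          _ = _ := lintegral_const_mul' _ _
              (ENNReal.rpow_ne_top_of_nonneg hp'0.le ENNReal.ofReal_ne_top)
      have hconj : Real.HolderConjugate (r/(r-1)) r :=
        Real.holderConjugate_iff.mpr ⟨(one_lt_div hq0).mpr (by linarith), by field_simp; ring⟩
      have h2 : (∫⁻ x, ((‖u x‖₊ : ℝ≥0∞) + ‖v x‖₊) ^ ((r-1)*((r+1)/r))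
            * (‖u x - v x‖₊ : ℝ≥0∞) ^ ((r+1)/r) ∂m)
          ≤ (∫⁻ x, ((‖u x‖₊ : ℝ≥0∞) + ‖v x‖₊) ^ (r+1) ∂m) ^ ((r-1)/r) * IH ^ (1/r) := by
        have hH := ENNReal.lintegral_mul_le_Lp_mul_Lq m hconj
          (hGm.pow_const ((r-1)*((r+1)/r))) (hHm.pow_const ((r+1)/r))
        simp only [Pi.mul_apply] at hH
        refine hH.trans (le_of_eq ?_)
        have e1 : ∀ y : ℝ≥0∞, (y ^ ((r-1)*((r+1)/r))) ^ (r/(r-1)) = y ^ (r+1) := fun y => by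
          rw [← ENNReal.rpow_mul]
          congr 1
          field_simp
        have e2 : ∀ y : ℝ≥0∞, (y ^ ((r+1)/r)) ^ r = y ^ (r+1) := fun y => by
          rw [← ENNReal.rpow_mul]
          congr 1
          field_simp
        rw [one_div_div, hIHdef]
        congr 2
        · exact lintegral_congr fun x => e1 _
        · exact lintegral_congr fun x => e2 _
      have h3 : (∫⁻ x, ((‖u x‖₊ : ℝ≥0∞) + ‖v x‖₊) ^ (r+1) ∂m) ^ (1/(r+1))
          ≤ IU ^ (1/(r+1)) + IV ^ (1/(r+1)) := by
        have hne : ENNReal.ofReal (r+1) ≠ 0 := by simp [hp1]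
        have hmk := eLpNorm_add_le (huA.norm) (hvA.norm)
          (p := ENNReal.ofReal (r+1)) (μ := m) (ENNReal.one_le_ofReal.mpr (by linarith))
        rw [eLpNorm_eq_lintegral_rpow_nnnorm hne ENNReal.ofReal_ne_top,
          eLpNorm_eq_lintegral_rpow_nnnorm hne ENNReal.ofReal_ne_top,
          eLpNorm_eq_lintegral_rpow_nnnorm hne ENNReal.ofReal_ne_top,
          ENNReal.toReal_ofReal hp1.le] at hmk
        refine le_trans (le_of_eq ?_) (hmk.trans (le_of_eq ?_))
        · congr 1
          refine lintegral_congr fun x => ?_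
          congr 1
          simp only [Pi.add_apply]
          rw [← ofReal_norm_eq_coe_nnnorm (‖u x‖ + ‖v x‖),
            Real.norm_of_nonneg (by positivity),
            ENNReal.ofReal_add (norm_nonneg _) (norm_nonneg _),
            ofReal_norm_eq_coe_nnnorm, ofReal_norm_eq_coe_nnnorm]
        · rw [hIUdef, hIVdef]
          congr 3
          · exact funext fun x => by rw [nnnorm_norm]
          · exact funext fun x => by rw [nnnorm_norm]
      have hIGfin : (∫⁻ x, ((‖u x‖₊ : ℝ≥0∞) + ‖v x‖₊) ^ (r+1) ∂m) ≠ ∞ := by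
        intro hcontra
        rw [hcontra, ENNReal.top_rpow_of_pos (by positivity)] at h3
        exact (ENNReal.add_lt_top.mpr ⟨hIUr.lt_top, hIVr.lt_top⟩).ne (top_le_iff.mp h3)
      have hAle2 : A ≤ ENNReal.ofReal r ^ ((r+1)/r) *
          ((∫⁻ x, ((‖u x‖₊ : ℝ≥0∞) + ‖v x‖₊) ^ (r+1) ∂m) ^ ((r-1)/r) * IH ^ (1/r)) :=
        h1.trans (mul_le_mul_right h2 _)
      have hAfin : A ≠ ∞ := by
        refine ne_top_of_le_ne_top ?_ hAle2
        exact ENNReal.mul_ne_top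
          (ENNReal.rpow_ne_top_of_nonneg hp'0.le ENNReal.ofReal_ne_top)
          (ENNReal.mul_ne_top (ENNReal.rpow_ne_top_of_nonneg (by positivity) hIGfin)
            (ENNReal.rpow_ne_top_of_nonneg (by positivity) hIHfin))
      refine ⟨hAfin, ?_⟩
      calc A ^ (r/(r+1))
          ≤ (ENNReal.ofReal r ^ ((r+1)/r) *
              ((∫⁻ x, ((‖u x‖₊ : ℝ≥0∞) + ‖v x‖₊) ^ (r+1) ∂m) ^ ((r-1)/r) * IH ^ (1/r)))
              ^ (r/(r+1)) := ENNReal.rpow_le_rpow hAle2 (by positivity)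
        _ = ENNReal.ofReal r *
              ((∫⁻ x, ((‖u x‖₊ : ℝ≥0∞) + ‖v x‖₊) ^ (r+1) ∂m) ^ ((r-1)/(r+1))
                * IH ^ (1/(r+1))) := by
            rw [ENNReal.mul_rpow_of_nonneg _ _ (by positivity),
              ENNReal.mul_rpow_of_nonneg _ _ (by positivity),
              ← ENNReal.rpow_mul, ← ENNReal.rpow_mul, ← ENNReal.rpow_mul,
              show (r+1)/r * (r/(r+1)) = 1 by field_simp,
              show (r-1)/r * (r/(r+1)) = (r-1)/(r+1) by
                field_simp,
              show 1/r * (r/(r+1)) = 1/(r+1) by field_simp,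
              ENNReal.rpow_one]
        _ = ENNReal.ofReal r *
              (((∫⁻ x, ((‖u x‖₊ : ℝ≥0∞) + ‖v x‖₊) ^ (r+1) ∂m) ^ (1/(r+1))) ^ (r-1)
                * IH ^ (1/(r+1))) := by
            rw [← ENNReal.rpow_mul, show 1/(r+1) * (r-1) = (r-1)/(r+1) by ring]
        _ ≤ ENNReal.ofReal r *
              ((IU ^ (1/(r+1)) + IV ^ (1/(r+1))) ^ (r-1) * IH ^ (1/(r+1))) :=
            mul_le_mul_right
              (mul_le_mul_left (ENNReal.rpow_le_rpow h3 (by linarith)) _) _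
        _ = ENNReal.ofReal r * (IU ^ (1/(r+1)) + IV ^ (1/(r+1))) ^ (r-1)
              * IH ^ (1/(r+1)) := by rw [mul_assoc]
  obtain ⟨hAfin, hAle⟩ := hmain
  constructor
  · refine ⟨hΦA, ?_⟩
    rw [eLpNorm_eq_lintegral_rpow_nnnorm (by simp [hp'0]) ENNReal.ofReal_ne_top,
      ENNReal.toReal_ofReal hp'0.le]
    exact ENNReal.rpow_lt_top_of_nonneg (by positivity) hAfin
  · rw [forch_integral_eq hΦA hp'0.le, forch_integral_eq huA hp1.le,
      forch_integral_eq hvA hp1.le, forch_integral_eq hwA hp1.le,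
      ← hAdef, ← hIUdef, ← hIVdef, ← hIHdef]
    have hIUr : IU ^ (1/(r+1)) ≠ ∞ := ENNReal.rpow_ne_top_of_nonneg (by positivity) hIUfin
    have hIVr : IV ^ (1/(r+1)) ≠ ∞ := ENNReal.rpow_ne_top_of_nonneg (by positivity) hIVfin
    have hRfin : ENNReal.ofReal r * (IU ^ (1/(r+1)) + IV ^ (1/(r+1))) ^ (r-1)
        * IH ^ (1/(r+1)) ≠ ∞ := by
      apply ENNReal.mul_ne_top (ENNReal.mul_ne_top ENNReal.ofReal_ne_top ?_) ?_
      · exact ENNReal.rpow_ne_top_of_nonneg (by linarith)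
          (ENNReal.add_ne_top.mpr ⟨hIUr, hIVr⟩)
      · exact ENNReal.rpow_ne_top_of_nonneg (by positivity) hIHfin
    have hfin := ENNReal.toReal_mono hRfin hAle
    rw [← ENNReal.toReal_rpow] at hfin
    calc (A.toReal) ^ (r/(r+1))
        ≤ (ENNReal.ofReal r * (IU ^ (1/(r+1)) + IV ^ (1/(r+1))) ^ (r-1)
            * IH ^ (1/(r+1))).toReal := hfin
      _ = r * (IU.toReal ^ (1/(r+1)) + IV.toReal ^ (1/(r+1))) ^ (r-1)
            * IH.toReal ^ (1/(r+1)) := by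
          rw [ENNReal.toReal_mul, ENNReal.toReal_mul, ENNReal.toReal_ofReal hr0.le,
            ← ENNReal.toReal_rpow, ← ENNReal.toReal_rpow, ENNReal.toReal_add hIUr hIVr,
            ← ENNReal.toReal_rpow, ← ENNReal.toReal_rpow]
end

section
/- Key convection estimate (2.30) of the paper. Let n ≥ 2, let r > 3 be real, let μ > 0 and β > 0, and set η = ((r−3)/(2μ(r−1))) · (2/(βμ(r−1)))^{2/(r−3)}. Let w : ℝⁿ → ℝⁿ be continuously differentiable with ∫ |w|² dx < ∞ and ∫ |∇w|² dx < ∞, and let v : ℝⁿ → ℝⁿ be measurable with ∫ |v(x)|^{r−1} |w(x)|² dx < ∞. Then the integrand Σ_{i,j} w_i (∂w_j/∂x_i) v_j is integrable and | ∫_{ℝⁿ} Σ_{i,j=1}^n w_i(x) (∂w_j/∂x_i)(x) v_j(x) dx | ≤ (μ/2) ∫_{ℝⁿ} |∇w(x)|² dx + (β/2) ∫_{ℝⁿ} |v(x)|^{r−1} |w(x)|² dx + η ∫_{ℝⁿ} |w(x)|² dx. -/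
open MeasureTheory
open scoped ENNReal

lemma young_vt (r μ β : ℝ) (hr : 3 < r) (hμ : 0 < μ) (hβ : 0 < β) (t : ℝ) (ht : 0 ≤ t) :
    t ^ 2 ≤ β * μ * t ^ (r - 1) + (r - 3) / (r - 1) * (2 / (β * μ * (r - 1))) ^ ((2 : ℝ) / (r - 3)) := by
  have hr1 : (0:ℝ) < r - 1 := by linarith
  have hr3 : (0:ℝ) < r - 3 := by linarith
  set K : ℝ := β * μ * (r - 1) / 2 with hK
  have hKpos : 0 < K := by positivity
  have h2K : 2 / (β * μ * (r - 1)) = K⁻¹ := by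
    rw [hK]; field_simp
  have htr : (0:ℝ) ≤ t ^ (r - 1) := Real.rpow_nonneg ht _
  have hp2 : (0:ℝ) ≤ (K⁻¹) ^ ((2:ℝ)/(r-3)) := Real.rpow_nonneg (by positivity) _
  have amgm := Real.geom_mean_le_arith_mean2_weighted
    (w₁ := 2/(r-1)) (w₂ := (r-3)/(r-1)) (p₁ := K * t ^ (r-1))
    (p₂ := (K⁻¹) ^ ((2:ℝ)/(r-3)))
    (by positivity) (by positivity) (by positivity) hp2 (by field_simp; ring)
  have hLHS : (K * t ^ (r-1)) ^ ((2:ℝ)/(r-1)) * ((K⁻¹) ^ ((2:ℝ)/(r-3))) ^ ((r-3)/(r-1)) = t ^ 2 := by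
    rw [Real.mul_rpow hKpos.le htr, ← Real.rpow_natCast t 2,
      ← Real.rpow_mul ht, ← Real.rpow_mul (by positivity : (0:ℝ) ≤ K⁻¹),
      Real.inv_rpow hKpos.le]
    have e1 : (r-1) * ((2:ℝ)/(r-1)) = 2 := by field_simp
    have e2 : (2:ℝ)/(r-3) * ((r-3)/(r-1)) = 2/(r-1) := by field_simp
    rw [e1, e2, ← Real.rpow_neg hKpos.le, Real.rpow_natCast]
    have h1 : K ^ ((2:ℝ)/(r-1)) * K ^ (-((2:ℝ)/(r-1))) = 1 := by
      rw [← Real.rpow_add hKpos]; norm_num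
    rw [mul_right_comm, h1, one_mul]; norm_num
  have hRHS : 2/(r-1) * (K * t ^ (r-1)) + (r-3)/(r-1) * ((K⁻¹) ^ ((2:ℝ)/(r-3)))
      = β * μ * t ^ (r-1) + (r-3)/(r-1) * (2/(β*μ*(r-1))) ^ ((2:ℝ)/(r-3)) := by
    rw [h2K, hK]; field_simp
  rw [← hRHS]
  calc t ^ 2 = _ := hLHS.symm
    _ ≤ _ := amgm

lemma normsq_eq {n : ℕ} (u : EuclideanSpace ℝ (Fin n)) : ‖u‖ ^ 2 = ∑ i, u i ^ 2 := by
  rw [EuclideanSpace.norm_eq, Real.sq_sqrt (by positivity)]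
  simp [sq_abs]

lemma pt_cs {n : ℕ} (u v : EuclideanSpace ℝ (Fin n)) (A : Fin n → Fin n → ℝ) :
    |∑ i, ∑ j, u i * A i j * v j| ≤ ‖u‖ * ‖v‖ * Real.sqrt (∑ i, ∑ j, A i j ^ 2) := by
  set G : ℝ := ∑ i, ∑ j, A i j ^ 2 with hGdef
  have hG : 0 ≤ G := by positivity
  have hs : ∑ i, ∑ j, u i * A i j * v j = ∑ j, (∑ i, u i * A i j) * v j := by
    rw [Finset.sum_comm]
    exact Finset.sum_congr rfl fun j _ => by rw [Finset.sum_mul]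
  have h1 := Finset.sum_mul_sq_le_sq_mul_sq Finset.univ (fun j => ∑ i, u i * A i j) (fun j => v j)
  have h3 : ∑ j, (∑ i, u i * A i j) ^ 2 ≤ (∑ i, u i ^ 2) * G := by
    calc ∑ j, (∑ i, u i * A i j) ^ 2
        ≤ ∑ j, (∑ i, u i ^ 2) * (∑ i, A i j ^ 2) :=
          Finset.sum_le_sum fun j _ => Finset.sum_mul_sq_le_sq_mul_sq Finset.univ _ _
      _ = (∑ i, u i ^ 2) * G := by rw [← Finset.mul_sum, hGdef, Finset.sum_comm]
  have hvnn : (0:ℝ) ≤ ∑ j, v j ^ 2 := by positivity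
  have hsq : (∑ i, ∑ j, u i * A i j * v j) ^ 2 ≤ (‖u‖ * ‖v‖ * Real.sqrt G) ^ 2 := by
    have hr : (‖u‖ * ‖v‖ * Real.sqrt G) ^ 2 = (∑ i, u i ^ 2) * (∑ j, v j ^ 2) * G := by
      rw [mul_pow, mul_pow, Real.sq_sqrt hG, normsq_eq, normsq_eq]
    rw [hs, hr]
    nlinarith [h1, h3, hvnn]
  calc |∑ i, ∑ j, u i * A i j * v j| = Real.sqrt ((∑ i, ∑ j, u i * A i j * v j) ^ 2) :=
        (Real.sqrt_sq_eq_abs _).symm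
    _ ≤ Real.sqrt ((‖u‖ * ‖v‖ * Real.sqrt G) ^ 2) := Real.sqrt_le_sqrt hsq
    _ = ‖u‖ * ‖v‖ * Real.sqrt G := Real.sqrt_sq (by positivity)

/-- Key convection estimate (2.30): for `r > 3`, `μ, β > 0`,
`η = ((r−3)/(2μ(r−1))) (2/(βμ(r−1)))^{2/(r−3)}`, `w` continuously differentiable with
`∫ |w|² < ∞` and `∫ |∇w|² < ∞`, and `v` measurable with `∫ |v|^{r−1}|w|² < ∞`, the integrand
`Σ_{i,j} w_i (∂w_j/∂x_i) v_j` is integrable and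
`|b(w,w,v)| ≤ (μ/2) ∫ |∇w|² + (β/2) ∫ |v|^{r−1}|w|² + η ∫ |w|²`. -/
theorem key_convection_estimate (n : ℕ) (hn : 2 ≤ n) (r μ β η : ℝ)
    (hr : 3 < r) (hμ : 0 < μ) (hβ : 0 < β)
    (hη : η = (r - 3) / (2 * μ * (r - 1)) * (2 / (β * μ * (r - 1))) ^ ((2 : ℝ) / (r - 3)))
    (w v : EuclideanSpace ℝ (Fin n) → EuclideanSpace ℝ (Fin n))
    (hw : ContDiff ℝ 1 w)
    (hw2 : Integrable (fun x => ‖w x‖ ^ 2))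
    (hgw : Integrable (fun x => gradSq n w x))
    (hv : AEStronglyMeasurable v volume)
    (hvw : Integrable (fun x => ‖v x‖ ^ (r - 1) * ‖w x‖ ^ 2)) :
    Integrable (fun x => ∑ i, ∑ j, w x i * fderiv ℝ w x (EuclideanSpace.single i 1) j * v x j)
    ∧ |∫ x, ∑ i, ∑ j, w x i * fderiv ℝ w x (EuclideanSpace.single i 1) j * v x j| ≤
        μ / 2 * (∫ x, gradSq n w x)
          + β / 2 * (∫ x, ‖v x‖ ^ (r - 1) * ‖w x‖ ^ 2)
          + η * (∫ x, ‖w x‖ ^ 2) := by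
  have hr1 : (0:ℝ) < r - 1 := by linarith
  have hr3 : (0:ℝ) < r - 3 := by linarith
  set f : EuclideanSpace ℝ (Fin n) → ℝ :=
    fun x => ∑ i, ∑ j, w x i * fderiv ℝ w x (EuclideanSpace.single i 1) j * v x j with hf
  set B : EuclideanSpace ℝ (Fin n) → ℝ :=
    fun x => μ / 2 * gradSq n w x + β / 2 * (‖v x‖ ^ (r - 1) * ‖w x‖ ^ 2) + η * ‖w x‖ ^ 2
    with hBdef
  -- pointwise bound
  have hηc : η = ((r - 3) / (r - 1) * (2 / (β * μ * (r - 1))) ^ ((2 : ℝ) / (r - 3))) / (2 * μ) := by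
    rw [hη]; field_simp
  have ptbound : ∀ x, |f x| ≤ B x := by
    intro x
    have hG : 0 ≤ gradSq n w x := by unfold gradSq; positivity
    have hcs := pt_cs (w x) (v x) (fun i j => fderiv ℝ w x (EuclideanSpace.single i 1) j)
    set a : ℝ := Real.sqrt (gradSq n w x) with ha
    have ha2 : a ^ 2 = gradSq n w x := Real.sq_sqrt hG
    set p : ℝ := ‖w x‖ * ‖v x‖ with hp
    have hpnn : 0 ≤ p := by positivity
    have step2 : p * a ≤ μ / 2 * a ^ 2 + 1 / (2 * μ) * p ^ 2 := by
      have h2 : 2 * μ * (p * a) ≤ 2 * μ * (μ / 2 * a ^ 2 + 1 / (2 * μ) * p ^ 2) := by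
        have he : 2 * μ * (μ / 2 * a ^ 2 + 1 / (2 * μ) * p ^ 2) = μ ^ 2 * a ^ 2 + p ^ 2 := by
          field_simp
        rw [he]; nlinarith [sq_nonneg (μ * a - p)]
      exact le_of_mul_le_mul_left h2 (by positivity)
    have hy := young_vt r μ β hr hμ hβ ‖v x‖ (norm_nonneg _)
    have hsnn : (0:ℝ) ≤ ‖w x‖ ^ 2 := by positivity
    have step3 : 1 / (2 * μ) * p ^ 2 ≤ β / 2 * (‖v x‖ ^ (r - 1) * ‖w x‖ ^ 2) + η * ‖w x‖ ^ 2 := by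
      have hmul := mul_le_mul_of_nonneg_right hy hsnn
      have h1m : 1 / (2 * μ) * (‖v x‖ ^ 2 * ‖w x‖ ^ 2)
          ≤ 1 / (2 * μ) * ((β * μ * ‖v x‖ ^ (r - 1)
            + (r - 3) / (r - 1) * (2 / (β * μ * (r - 1))) ^ ((2 : ℝ) / (r - 3))) * ‖w x‖ ^ 2) :=
        mul_le_mul_of_nonneg_left hmul (by positivity)
      have hpe : p ^ 2 = ‖v x‖ ^ 2 * ‖w x‖ ^ 2 := by rw [hp]; ring
      rw [hpe]
      refine h1m.trans (le_of_eq ?_)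
      rw [hηc]; field_simp
    calc |f x| ≤ p * a := hcs
      _ ≤ μ / 2 * a ^ 2 + 1 / (2 * μ) * p ^ 2 := step2
      _ ≤ μ / 2 * gradSq n w x + (β / 2 * (‖v x‖ ^ (r - 1) * ‖w x‖ ^ 2) + η * ‖w x‖ ^ 2) := by
          rw [ha2]; exact add_le_add_right step3 _
      _ = B x := by rw [hBdef]; ring
  -- measurability
  have hwc : Continuous w := hw.continuous
  have hA : Continuous (fun x => fderiv ℝ w x) := hw.continuous_fderiv one_ne_zero
  have hmeas : AEStronglyMeasurable f volume := by
    refine Finset.aestronglyMeasurable_fun_sum _ fun i _ => Finset.aestronglyMeasurable_fun_sum _ fun j _ => ?_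
    have h1 : Continuous fun x => w x i := (EuclideanSpace.proj i).continuous.comp hwc
    have h2 : Continuous fun x => fderiv ℝ w x (EuclideanSpace.single i 1) j := by
      exact (EuclideanSpace.proj j).continuous.comp
        (isBoundedBilinearMap_apply.continuous.comp (hA.prodMk continuous_const))
    have h3 : AEStronglyMeasurable (fun x => v x j) volume :=
      (EuclideanSpace.proj j).continuous.comp_aestronglyMeasurable hv
    exact ((h1.aestronglyMeasurable.mul h2.aestronglyMeasurable).mul h3)
  have hI2 : Integrable (fun x => μ / 2 * gradSq n w x) volume := hgw.const_mul _
  have hI3 : Integrable (fun x => β / 2 * (‖v x‖ ^ (r - 1) * ‖w x‖ ^ 2)) volume :=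
    hvw.const_mul _
  have hI4 : Integrable (fun x => η * ‖w x‖ ^ 2) volume := hw2.const_mul _
  have hI1 : Integrable
      (fun x => μ / 2 * gradSq n w x + β / 2 * (‖v x‖ ^ (r - 1) * ‖w x‖ ^ 2)) volume :=
    hI2.add hI3
  have hB : Integrable B volume := hI1.add hI4
  have hint : Integrable f volume := by
    refine hB.mono' hmeas ?_
    filter_upwards with x
    rw [Real.norm_eq_abs]
    exact ptbound x
  refine ⟨hint, ?_⟩
  have h4 : |∫ x, f x| ≤ ∫ x, |f x| := by
    simpa [Real.norm_eq_abs] using norm_integral_le_integral_norm (μ := volume) f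
  have h5 : ∫ x, |f x| ≤ ∫ x, B x := integral_mono hint.abs hB fun x => ptbound x
  have h6 : (∫ x, (μ / 2 * gradSq n w x + β / 2 * (‖v x‖ ^ (r - 1) * ‖w x‖ ^ 2)
        + η * ‖w x‖ ^ 2)) = μ / 2 * (∫ x, gradSq n w x)
      + β / 2 * (∫ x, ‖v x‖ ^ (r - 1) * ‖w x‖ ^ 2) + η * (∫ x, ‖w x‖ ^ 2) := by
    rw [integral_add hI1 hI4, integral_add hI2 hI3,
      integral_const_mul, integral_const_mul, integral_const_mul]
  have h7 : ∫ x, B x = μ / 2 * (∫ x, gradSq n w x)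
      + β / 2 * (∫ x, ‖v x‖ ^ (r - 1) * ‖w x‖ ^ 2) + η * (∫ x, ‖w x‖ ^ 2) := h6
  linarith [h4, h5, h7.le, h7.ge]
end
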